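/- arXiv:1107.2855 — 4 statements merged into one kernel-verified Lean document; each statement's English description precedes it below -/
import Mathlib

section
/- For all integers m ≥ 2 and k ≥ 1, ∑_{j=k}^{m−1} P_{m,m−j} ≤ P(V ≥ k); that is, the first jump of the block-counting chain started from m is stochastically dominated by V. -/
open scoped Classical

noncomputable section

/-- The Euler Beta function `B(x,y) = Γ(x)Γ(y)/Γ(x+y)`. -/
def betaR (x y : ℝ) : ℝ := Real.Gamma x * Real.Gamma y / Real.Gamma (x + y)

/-- The coalescence rate `ρ_{m,m-k+1}` of the Beta(2-α,α)-coalescent. -/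
def collRate (α : ℝ) (m k : ℕ) : ℝ :=
  (1 / (Real.Gamma (2 - α) * Real.Gamma α)) * (m.choose k) *
    betaR ((k : ℝ) - α) ((m : ℝ) - (k : ℝ) + α)

/-- The merging rate `ρ_{m,l}` from `m` blocks to `l` blocks (here `l = m-k+1`,
i.e. `k = m-l+1` blocks merge into one). -/
def rateML (α : ℝ) (m l : ℕ) : ℝ := collRate α m (m - l + 1)

/-- The total merging rate `ρ_m = ∑_{l=1}^{m-1} ρ_{m,l}`. -/
def totalRate (α : ℝ) (m : ℕ) : ℝ := ∑ l ∈ Finset.Ico 1 m, rateML α m l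

/-- The jump probability `P_{m,l} = ρ_{m,l}/ρ_m`. -/
def jumpProb (α : ℝ) (m l : ℕ) : ℝ := rateML α m l / totalRate α m

/-- The probability mass function of `V`: `P(V = k) = (α/Γ(2-α)) Γ(k+1-α)/Γ(k+2)`, `k ≥ 1`. -/
def Vpmf (α : ℝ) (k : ℕ) : ℝ :=
  α / Real.Gamma (2 - α) * (Real.Gamma ((k : ℝ) + 1 - α) / Real.Gamma ((k : ℝ) + 2))

/-- The tail `P(V ≥ k)` of `V`. -/
def Vge (α : ℝ) (k : ℕ) : ℝ := ∑' j : ℕ, if k ≤ j ∧ 1 ≤ j then Vpmf α j else 0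

namespace FJD

def sAux (α : ℝ) (m i : ℕ) : ℝ :=
  (m.choose i : ℝ) * Real.Gamma ((i : ℝ) - α) * Real.Gamma ((m : ℝ) - (i : ℝ) + α)

def Ssum (α : ℝ) (m k : ℕ) : ℝ := ∑ i ∈ Finset.Icc k m, sAux α m i

lemma sub_pos_of_two_le {α : ℝ} (hα2 : α < 2) {i : ℕ} (h2 : 2 ≤ i) : 0 < (i : ℝ) - α := by
  have : (2 : ℝ) ≤ (i : ℝ) := by exact_mod_cast h2
  linarith

lemma sAux_pos {α : ℝ} (hα1 : 1 < α) (hα2 : α < 2) {m i : ℕ} (h2 : 2 ≤ i) (him : i ≤ m) :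
    0 < sAux α m i := by
  have h1 : 0 < (m.choose i : ℝ) := by exact_mod_cast Nat.choose_pos him
  have h3 : 0 < Real.Gamma ((i : ℝ) - α) :=
    Real.Gamma_pos_of_pos (sub_pos_of_two_le hα2 h2)
  have h4 : 0 < Real.Gamma ((m : ℝ) - (i : ℝ) + α) := by
    apply Real.Gamma_pos_of_pos
    have : (i : ℝ) ≤ (m : ℝ) := by exact_mod_cast him
    linarith
  exact mul_pos (mul_pos h1 h3) h4

lemma sAux_nonneg {α : ℝ} (hα1 : 1 < α) (hα2 : α < 2) {m i : ℕ} (h2 : 2 ≤ i) :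
    0 ≤ sAux α m i := by
  by_cases him : i ≤ m
  · exact (sAux_pos hα1 hα2 h2 him).le
  · simp [sAux, Nat.choose_eq_zero_of_lt (lt_of_not_ge him)]

lemma sum_Icc_telescope (F : ℕ → ℝ) {a b : ℕ} (h : a ≤ b) :
    ∑ i ∈ Finset.Icc a b, (F i - F (i + 1)) = F a - F (b + 1) := by
  induction b, h using Nat.le_induction with
  | base => simp
  | succ b hab ih =>
      rw [Finset.sum_Icc_succ_top (by omega), ih]
      ring

lemma sAux_step {α : ℝ} (hα1 : 1 < α) (hα2 : α < 2) {m i : ℕ} (h2 : 2 ≤ i) (him : i + 1 ≤ m) :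
    sAux α m (i + 1) * ((i : ℝ) + 1) ≤ ((i : ℝ) - α) * sAux α m i := by
  have hiα : (0:ℝ) < (i : ℝ) - α := by
    have : (2 : ℝ) ≤ (i : ℝ) := by exact_mod_cast h2
    linarith
  have hA : (0:ℝ) < (m : ℝ) - (i : ℝ) - 1 + α := by
    have : (i : ℝ) + 1 ≤ (m : ℝ) := by exact_mod_cast him
    linarith
  -- cast choose identity
  have hch : (m.choose (i + 1) : ℝ) * ((i : ℝ) + 1) = (m.choose i : ℝ) * ((m : ℝ) - (i : ℝ)) := by
    have := Nat.choose_succ_right_eq m i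
    have hmi : ((m - i : ℕ) : ℝ) = (m : ℝ) - (i : ℝ) := by
      have : i ≤ m := by omega
      push_cast [this]; ring
    calc (m.choose (i + 1) : ℝ) * ((i : ℝ) + 1)
        = ((m.choose (i + 1) * (i + 1) : ℕ) : ℝ) := by push_cast; ring
      _ = ((m.choose i * (m - i) : ℕ) : ℝ) := by rw [Nat.choose_succ_right_eq]
      _ = (m.choose i : ℝ) * ((m : ℝ) - (i : ℝ)) := by push_cast [show i ≤ m by omega]; ring
  have hg1 : Real.Gamma (((i : ℕ) + 1 : ℕ) - α : ℝ) = ((i : ℝ) - α) * Real.Gamma ((i : ℝ) - α) := by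
    have h := Real.Gamma_add_one (ne_of_gt hiα)
    have : (((i : ℕ) + 1 : ℕ) : ℝ) - α = ((i : ℝ) - α) + 1 := by push_cast; ring
    rw [this, h]
  have hg2 : Real.Gamma ((m : ℝ) - (i : ℝ) + α)
      = ((m : ℝ) - (i : ℝ) - 1 + α) * Real.Gamma ((m : ℝ) - (i : ℝ) - 1 + α) := by
    have h := Real.Gamma_add_one (ne_of_gt hA)
    have e : (m : ℝ) - (i : ℝ) + α = ((m : ℝ) - (i : ℝ) - 1 + α) + 1 := by ring
    rw [e, h]
  -- the exact identity
  have key : sAux α m (i + 1) * (((i : ℝ) + 1) * ((m : ℝ) - (i : ℝ) - 1 + α))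
      = sAux α m i * (((m : ℝ) - (i : ℝ)) * ((i : ℝ) - α)) := by
    unfold sAux
    have e2 : (m : ℝ) - (((i : ℕ) + 1 : ℕ) : ℝ) + α = (m : ℝ) - (i : ℝ) - 1 + α := by
      push_cast; ring
    rw [e2, hg1, hg2]
    linear_combination (Real.Gamma ((i:ℝ) - α) * Real.Gamma ((m:ℝ) - (i:ℝ) - 1 + α) *
      ((m:ℝ) - (i:ℝ) - 1 + α) * ((i:ℝ) - α)) * hch
  have hs : 0 ≤ sAux α m i := by
    have h1 : 0 < (m.choose i : ℝ) := by exact_mod_cast Nat.choose_pos (by omega : i ≤ m)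
    have h3 : 0 < Real.Gamma ((i : ℝ) - α) := Real.Gamma_pos_of_pos hiα
    have h4 : 0 < Real.Gamma ((m : ℝ) - (i : ℝ) + α) := by
      apply Real.Gamma_pos_of_pos
      have : (i : ℝ) ≤ (m : ℝ) := by exact_mod_cast (by omega : i ≤ m)
      linarith
    exact le_of_lt (mul_pos (mul_pos h1 h3) h4)
  -- from key: sAux(i+1)*(i+1) = sAux i*(m-i)*(i-α)/A ≤ (i-α) * sAux i
  have hmi_le : (m : ℝ) - (i : ℝ) ≤ (m : ℝ) - (i : ℝ) - 1 + α := by linarith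
  nlinarith [mul_le_mul_of_nonneg_right hmi_le (mul_nonneg hs hiα.le)]

lemma sAux_decay {α : ℝ} (hα1 : 1 < α) (hα2 : α < 2) {m k : ℕ} (h2 : 2 ≤ k)
    {i : ℕ} (hki : k ≤ i) (him : i ≤ m) :
    sAux α m i * (Real.Gamma ((k : ℝ) - α) * Real.Gamma ((i : ℝ) + 1)) ≤
      sAux α m k * (Real.Gamma ((i : ℝ) - α) * Real.Gamma ((k : ℝ) + 1)) := by
  induction i, hki using Nat.le_induction with
  | base => exact le_of_eq rfl
  | succ i hki ih =>
      have him' : i ≤ m := by omega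
      have ih' := ih him'
      have h2i : 2 ≤ i := by omega
      have hiα : (0:ℝ) < (i : ℝ) - α := by
        have : (2 : ℝ) ≤ (i : ℝ) := by exact_mod_cast h2i
        linarith
      have hstep := sAux_step hα1 hα2 h2i him
      have hg1 : Real.Gamma ((((i : ℕ) + 1 : ℕ) : ℝ) - α)
          = ((i : ℝ) - α) * Real.Gamma ((i : ℝ) - α) := by
        have h := Real.Gamma_add_one (ne_of_gt hiα)
        have e : (((i : ℕ) + 1 : ℕ) : ℝ) - α = ((i : ℝ) - α) + 1 := by push_cast; ring
        rw [e, h]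
      have hg2 : Real.Gamma ((((i : ℕ) + 1 : ℕ) : ℝ) + 1)
          = ((i : ℝ) + 1) * Real.Gamma ((i : ℝ) + 1) := by
        have h := Real.Gamma_add_one (s := (i : ℝ) + 1) (by positivity)
        have e : (((i : ℕ) + 1 : ℕ) : ℝ) + 1 = ((i : ℝ) + 1) + 1 := by push_cast; ring
        rw [e, h]
      have hΓk : 0 < Real.Gamma ((k : ℝ) - α) := by
        apply Real.Gamma_pos_of_pos
        have : (2 : ℝ) ≤ (k : ℝ) := by exact_mod_cast h2
        linarith
      have hΓi1 : 0 < Real.Gamma ((i : ℝ) + 1) := Real.Gamma_pos_of_pos (by positivity)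
      have hΓk1 : 0 < Real.Gamma ((k : ℝ) + 1) := Real.Gamma_pos_of_pos (by positivity)
      rw [hg1, hg2]
      calc sAux α m (i + 1) * (Real.Gamma ((k : ℝ) - α) * (((i : ℝ) + 1) * Real.Gamma ((i : ℝ) + 1)))
          = (sAux α m (i + 1) * ((i : ℝ) + 1)) * (Real.Gamma ((k : ℝ) - α) * Real.Gamma ((i : ℝ) + 1)) := by ring
        _ ≤ (((i : ℝ) - α) * sAux α m i) * (Real.Gamma ((k : ℝ) - α) * Real.Gamma ((i : ℝ) + 1)) := by
            exact mul_le_mul_of_nonneg_right hstep (by positivity)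
        _ = ((i : ℝ) - α) * (sAux α m i * (Real.Gamma ((k : ℝ) - α) * Real.Gamma ((i : ℝ) + 1))) := by ring
        _ ≤ ((i : ℝ) - α) * (sAux α m k * (Real.Gamma ((i : ℝ) - α) * Real.Gamma ((k : ℝ) + 1))) := by
            exact mul_le_mul_of_nonneg_left ih' hiα.le
        _ = sAux α m k * (((i : ℝ) - α) * Real.Gamma ((i : ℝ) - α) * Real.Gamma ((k : ℝ) + 1)) := by ring

lemma tail_bound {α : ℝ} (hα1 : 1 < α) (hα2 : α < 2) {m k : ℕ} (h2 : 2 ≤ k) :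
    α * Ssum α m (k + 1) ≤ ((k : ℝ) - α) * sAux α m k := by
  have hk2 : (2:ℝ) ≤ (k : ℝ) := by exact_mod_cast h2
  have hkα : (0:ℝ) < (k : ℝ) - α := by linarith
  by_cases hm : k + 1 ≤ m
  case neg =>
    have : Finset.Icc (k+1) m = ∅ := by
      apply Finset.Icc_eq_empty; omega
    rw [Ssum, this]
    simp only [Finset.sum_empty, mul_zero]
    exact mul_nonneg hkα.le (sAux_nonneg hα1 hα2 h2)
  case pos =>
  have hΓkα : 0 < Real.Gamma ((k : ℝ) - α) := Real.Gamma_pos_of_pos hkα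
  have hΓk1 : 0 < Real.Gamma ((k : ℝ) + 1) := Real.Gamma_pos_of_pos (by positivity)
  set C : ℝ := sAux α m k * Real.Gamma ((k : ℝ) + 1) / Real.Gamma ((k : ℝ) - α) with hC
  have hCnn : 0 ≤ C := by
    apply div_nonneg (mul_nonneg (sAux_nonneg hα1 hα2 h2) hΓk1.le) hΓkα.le
  set F : ℕ → ℝ := fun i => Real.Gamma ((i : ℝ) - α) / Real.Gamma ((i : ℝ)) with hF
  -- per-term bound
  have hterm : ∀ i ∈ Finset.Icc (k+1) m, α * sAux α m i ≤ C * (F i - F (i + 1)) := by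
    intro i hi
    rw [Finset.mem_Icc] at hi
    obtain ⟨hki, him⟩ := hi
    have h2i : 2 ≤ i := by omega
    have hi2 : (2:ℝ) ≤ (i:ℝ) := by exact_mod_cast h2i
    have hiα : (0:ℝ) < (i : ℝ) - α := by linarith
    have hipos : (0:ℝ) < (i : ℝ) := by linarith
    have hΓi : 0 < Real.Gamma ((i : ℝ)) := Real.Gamma_pos_of_pos hipos
    have hΓiα : 0 < Real.Gamma ((i : ℝ) - α) := Real.Gamma_pos_of_pos hiα
    have hg1 : Real.Gamma ((((i : ℕ) + 1 : ℕ) : ℝ) - α)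
        = ((i : ℝ) - α) * Real.Gamma ((i : ℝ) - α) := by
      have h := Real.Gamma_add_one (ne_of_gt hiα)
      have e : (((i : ℕ) + 1 : ℕ) : ℝ) - α = ((i : ℝ) - α) + 1 := by push_cast; ring
      rw [e, h]
    have hg2 : Real.Gamma ((((i : ℕ) + 1 : ℕ) : ℝ))
        = (i : ℝ) * Real.Gamma ((i : ℝ)) := by
      have h := Real.Gamma_add_one (ne_of_gt hipos)
      have e : (((i : ℕ) + 1 : ℕ) : ℝ) = (i : ℝ) + 1 := by push_cast; ring
      rw [e, h]
    have hFdiff : F i - F (i + 1) = α * Real.Gamma ((i : ℝ) - α) / ((i : ℝ) * Real.Gamma ((i : ℝ))) := by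
      rw [hF]
      simp only
      rw [hg1, hg2]
      field_simp
      ring
    have hΓi1 : Real.Gamma ((i : ℝ) + 1) = (i : ℝ) * Real.Gamma ((i : ℝ)) :=
      Real.Gamma_add_one (ne_of_gt hipos)
    have hdec := sAux_decay hα1 hα2 h2 (by omega : k ≤ i) him
    rw [hΓi1] at hdec
    rw [hFdiff, hC]
    rw [div_mul_div_comm, le_div_iff₀ (by positivity)]
    calc α * sAux α m i * (Real.Gamma ((k : ℝ) - α) * ((i : ℝ) * Real.Gamma ((i:ℝ))))
        = (sAux α m i * (Real.Gamma ((k : ℝ) - α) * ((i : ℝ) * Real.Gamma ((i:ℝ))))) * α := by ring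
      _ ≤ (sAux α m k * (Real.Gamma ((i : ℝ) - α) * Real.Gamma ((k : ℝ) + 1))) * α := by
          exact mul_le_mul_of_nonneg_right hdec (by linarith)
      _ = sAux α m k * Real.Gamma ((k:ℝ) + 1) * (α * Real.Gamma ((i:ℝ) - α)) := by ring
  -- sum up
  have hsum : α * Ssum α m (k + 1) ≤ C * (F (k+1) - F (m+1)) := by
    rw [Ssum, Finset.mul_sum, ← sum_Icc_telescope F hm, Finset.mul_sum]
    exact Finset.sum_le_sum hterm
  have hFm1 : 0 ≤ F (m + 1) := by
    apply div_nonneg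
    · apply (Real.Gamma_pos_of_pos ?_).le
      have : (k:ℝ) + 1 ≤ (m:ℝ) + 1 := by exact_mod_cast by omega
      push_cast
      linarith
    · apply (Real.Gamma_pos_of_pos ?_).le
      push_cast
      positivity
  have hCF : C * F (k+1) = ((k : ℝ) - α) * sAux α m k := by
    have hg1 : Real.Gamma ((((k : ℕ) + 1 : ℕ) : ℝ) - α)
        = ((k : ℝ) - α) * Real.Gamma ((k : ℝ) - α) := by
      have h := Real.Gamma_add_one (ne_of_gt hkα)
      have e : (((k : ℕ) + 1 : ℕ) : ℝ) - α = ((k : ℝ) - α) + 1 := by push_cast; ring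
      rw [e, h]
    have e2 : (((k : ℕ) + 1 : ℕ) : ℝ) = (k : ℝ) + 1 := by push_cast; ring
    rw [hF, hC]
    simp only
    rw [hg1, e2]
    field_simp
  calc α * Ssum α m (k + 1) ≤ C * (F (k+1) - F (m+1)) := hsum
    _ ≤ C * F (k+1) := by nlinarith
    _ = ((k : ℝ) - α) * sAux α m k := hCF

lemma Ssum_step {α : ℝ} (hα1 : 1 < α) (hα2 : α < 2) {m k : ℕ} (h2 : 2 ≤ k) :
    Ssum α m (k + 1) ≤ (((k : ℝ) - α) / (k : ℝ)) * Ssum α m k := by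
  have hk2 : (2:ℝ) ≤ (k : ℝ) := by exact_mod_cast h2
  have hkpos : (0:ℝ) < (k:ℝ) := by linarith
  by_cases hkm : k ≤ m
  case neg =>
    have h1 : Finset.Icc (k+1) m = ∅ := Finset.Icc_eq_empty (by omega)
    have h2' : Finset.Icc k m = ∅ := Finset.Icc_eq_empty (by omega)
    rw [Ssum, Ssum, h1, h2']
    simp
  case pos =>
  have hsplit : Ssum α m k = sAux α m k + Ssum α m (k + 1) := by
    rw [Ssum, Ssum, Finset.Icc_eq_cons_Ioc hkm, Finset.sum_cons, ← Finset.Icc_add_one_left_eq_Ioc]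
  have htail := tail_bound hα1 hα2 (m := m) h2
  rw [div_mul_eq_mul_div, le_div_iff₀ hkpos]
  nlinarith [htail, hsplit]

lemma main_ind {α : ℝ} (hα1 : 1 < α) (hα2 : α < 2) {m k : ℕ} (hk : 1 ≤ k) :
    Real.Gamma (2 - α) * Ssum α m (k + 1) ≤
      Real.Gamma ((k : ℝ) + 1 - α) / Real.Gamma ((k : ℝ) + 1) * Ssum α m 2 := by
  have hΓ2α : 0 < Real.Gamma (2 - α) := Real.Gamma_pos_of_pos (by linarith)
  induction k, hk using Nat.le_induction with
  | base =>
      have : ((1:ℕ) : ℝ) + 1 - α = 2 - α := by norm_num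
      rw [this]
      have h2 : Real.Gamma ((1:ℕ) + 1 : ℝ) = 1 := by norm_num [Real.Gamma_two]
      rw [h2]
      simp
  | succ k hk1 ih =>
      have h2k : 2 ≤ k + 1 := by omega
      have hk1R : (1:ℝ) ≤ (k:ℝ) := by exact_mod_cast hk1
      have hstep := Ssum_step hα1 hα2 (m := m) h2k
      have hΓk1 : 0 < Real.Gamma ((k : ℝ) + 1) := Real.Gamma_pos_of_pos (by linarith)
      have hΓk2 : Real.Gamma ((k : ℝ) + 1 + 1) = ((k:ℝ) + 1) * Real.Gamma ((k : ℝ) + 1) :=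
        Real.Gamma_add_one (by linarith)
      have hΓk1α : Real.Gamma ((k : ℝ) + 1 + 1 - α) = ((k:ℝ) + 1 - α) * Real.Gamma ((k : ℝ) + 1 - α) := by
        have h := Real.Gamma_add_one (s := (k:ℝ) + 1 - α) (by nlinarith)
        have e : (k : ℝ) + 1 + 1 - α = ((k:ℝ) + 1 - α) + 1 := by ring
        rw [e, h]
      have ecast1 : (((k:ℕ)+1 : ℕ) : ℝ) = (k:ℝ) + 1 := by push_cast; ring
      calc Real.Gamma (2 - α) * Ssum α m (k + 1 + 1)
          ≤ Real.Gamma (2 - α) * (((((k:ℕ)+1 : ℕ) : ℝ) - α) / (((k:ℕ)+1 : ℕ) : ℝ) * Ssum α m (k + 1)) := by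
            apply mul_le_mul_of_nonneg_left hstep hΓ2α.le
        _ = (((k:ℝ) + 1 - α) / ((k:ℝ) + 1)) * (Real.Gamma (2 - α) * Ssum α m (k + 1)) := by
            rw [ecast1]; ring
        _ ≤ (((k:ℝ) + 1 - α) / ((k:ℝ) + 1)) * (Real.Gamma ((k : ℝ) + 1 - α) / Real.Gamma ((k : ℝ) + 1) * Ssum α m 2) := by
            apply mul_le_mul_of_nonneg_left ih
            apply div_nonneg <;> linarith
        _ = Real.Gamma ((((k:ℕ)+1 : ℕ) : ℝ) + 1 - α) / Real.Gamma ((((k:ℕ)+1 : ℕ) : ℝ) + 1) * Ssum α m 2 := by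
            rw [ecast1, hΓk2, hΓk1α]
            field_simp

def W (α : ℝ) (n : ℕ) : ℝ :=
  Real.Gamma ((n : ℝ) + 1 - α) / (Real.Gamma (2 - α) * Real.Gamma ((n : ℝ) + 1))

lemma W_nonneg {α : ℝ} (hα1 : 1 < α) (hα2 : α < 2) {n : ℕ} (hn : 1 ≤ n) : 0 ≤ W α n := by
  have h1 : (1:ℝ) ≤ (n:ℝ) := by exact_mod_cast hn
  apply div_nonneg
  · exact (Real.Gamma_pos_of_pos (by linarith)).le
  · exact (mul_nonneg (Real.Gamma_pos_of_pos (by linarith)).le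
      (Real.Gamma_pos_of_pos (by linarith)).le)

lemma Vpmf_eq_W_sub {α : ℝ} (hα1 : 1 < α) (hα2 : α < 2) {j : ℕ} (hj : 1 ≤ j) :
    Vpmf α j = W α j - W α (j + 1) := by
  have hj1 : (1:ℝ) ≤ (j:ℝ) := by exact_mod_cast hj
  have h1 : (0:ℝ) < (j:ℝ) + 1 - α := by linarith
  have h2 : (0:ℝ) < (j:ℝ) + 1 := by linarith
  have hg1 : Real.Gamma ((j:ℝ) + 2 - α) = ((j:ℝ) + 1 - α) * Real.Gamma ((j:ℝ) + 1 - α) := by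
    have h := Real.Gamma_add_one (ne_of_gt h1)
    have e : (j:ℝ) + 2 - α = ((j:ℝ) + 1 - α) + 1 := by ring
    rw [e, h]
  have hg2 : Real.Gamma ((j:ℝ) + 2) = ((j:ℝ) + 1) * Real.Gamma ((j:ℝ) + 1) := by
    have h := Real.Gamma_add_one (ne_of_gt h2)
    have e : (j:ℝ) + 2 = ((j:ℝ) + 1) + 1 := by ring
    rw [e, h]
  have hΓ2α : 0 < Real.Gamma (2 - α) := Real.Gamma_pos_of_pos (by linarith)
  have hΓj1 : 0 < Real.Gamma ((j:ℝ) + 1) := Real.Gamma_pos_of_pos h2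
  rw [Vpmf, W, W]
  have ec : ((j + 1 : ℕ) : ℝ) = (j:ℝ) + 1 := by push_cast; ring
  rw [ec]
  have e1 : (j:ℝ) + 1 + 1 - α = (j:ℝ) + 2 - α := by ring
  have e2 : (j:ℝ) + 1 + 1 = (j:ℝ) + 2 := by ring
  rw [e1, e2, hg1, hg2]
  field_simp
  ring

lemma W_le {α : ℝ} (hα1 : 1 < α) (hα2 : α < 2) {n : ℕ} (hn : 3 ≤ n) :
    W α n ≤ (1 / Real.Gamma (2 - α)) * (1 / (n : ℝ)) := by
  have hn3 : (3:ℝ) ≤ (n:ℝ) := by exact_mod_cast hn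
  have hΓ2α : 0 < Real.Gamma (2 - α) := Real.Gamma_pos_of_pos (by linarith)
  have hΓn : 0 < Real.Gamma ((n:ℝ)) := Real.Gamma_pos_of_pos (by linarith)
  have hmono : Real.Gamma ((n:ℝ) + 1 - α) ≤ Real.Gamma ((n:ℝ)) := by
    apply le_of_lt
    apply Real.Gamma_strictMonoOn_Ici (by simp [Set.mem_Ici]; linarith)
      (by simp [Set.mem_Ici]; linarith)
    linarith
  have hg : Real.Gamma ((n:ℝ) + 1) = (n:ℝ) * Real.Gamma ((n:ℝ)) :=
    Real.Gamma_add_one (by positivity)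
  rw [W, hg]
  rw [div_le_iff₀ (by positivity)]
  calc Real.Gamma ((n:ℝ) + 1 - α) ≤ Real.Gamma ((n:ℝ)) := hmono
    _ = 1 / Real.Gamma (2 - α) * (1 / (n:ℝ)) * (Real.Gamma (2 - α) * ((n:ℝ) * Real.Gamma ((n:ℝ)))) := by
        field_simp

lemma W_tendsto {α : ℝ} (hα1 : 1 < α) (hα2 : α < 2) :
    Filter.Tendsto (W α) Filter.atTop (nhds 0) := by
  apply squeeze_zero'
  · filter_upwards [Filter.eventually_ge_atTop 1] with n hn
    exact W_nonneg hα1 hα2 hn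
  · filter_upwards [Filter.eventually_ge_atTop 3] with n hn
    exact W_le hα1 hα2 hn
  · have h := tendsto_one_div_atTop_nhds_zero_nat.const_mul (1 / Real.Gamma (2 - α))
    simpa using h

lemma Vge_eq {α : ℝ} (hα1 : 1 < α) (hα2 : α < 2) {k : ℕ} (hk : 1 ≤ k) :
    Vge α k = W α k := by
  have hhs : HasSum (fun j : ℕ => if k ≤ j ∧ 1 ≤ j then Vpmf α j else 0) (W α k) := by
    have h1 : HasSum (fun n : ℕ => if k ≤ n + k ∧ 1 ≤ n + k then Vpmf α (n + k) else 0) (W α k) := by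
      have he : (fun n : ℕ => if k ≤ n + k ∧ 1 ≤ n + k then Vpmf α (n + k) else 0)
          = fun n : ℕ => W α (n + k) - W α (n + k + 1) := by
        funext n
        rw [if_pos ⟨by omega, by omega⟩, Vpmf_eq_W_sub hα1 hα2 (by omega)]
      rw [he]
      rw [hasSum_iff_tendsto_nat_of_nonneg]
      · have hps : ∀ n : ℕ, ∑ i ∈ Finset.range n, (W α (i + k) - W α (i + k + 1))
            = W α k - W α (n + k) := by
          intro n
          have h0 := Finset.sum_range_sub' (fun i => W α (i + k)) n
          simp only [zero_add] at h0
          have e : ∀ i : ℕ, i + k + 1 = i + 1 + k := fun i => by omega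
          simp only [e]
          simpa using h0
        simp only [hps]
        have hlim : Filter.Tendsto (fun n : ℕ => W α (n + k)) Filter.atTop (nhds 0) :=
          (W_tendsto hα1 hα2).comp (Filter.tendsto_add_atTop_nat k)
        have := (tendsto_const_nhds (x := W α k) (f := Filter.atTop (α := ℕ))).sub hlim
        simpa using this
      · intro i
        rw [← Vpmf_eq_W_sub hα1 hα2 (by omega)]
        have hj1 : (1:ℝ) ≤ ((i + k : ℕ):ℝ) := by exact_mod_cast Nat.one_le_iff_ne_zero.mpr (by omega)
        apply mul_nonneg
        · apply div_nonneg (by linarith)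
          exact (Real.Gamma_pos_of_pos (by linarith)).le
        · apply div_nonneg
          · exact (Real.Gamma_pos_of_pos (by linarith)).le
          · exact (Real.Gamma_pos_of_pos (by linarith)).le
    have h2 := (hasSum_nat_add_iff (f := fun j : ℕ => if k ≤ j ∧ 1 ≤ j then Vpmf α j else 0) k).mp h1
    have hz : ∑ i ∈ Finset.range k, (if k ≤ i ∧ 1 ≤ i then Vpmf α i else 0) = 0 := by
      apply Finset.sum_eq_zero
      intro i hi
      rw [Finset.mem_range] at hi
      rw [if_neg (by omega)]
    rwa [hz, add_zero] at h2
  rw [Vge]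
  exact hhs.tsum_eq

lemma collRate_eq (α : ℝ) (m i : ℕ) :
    collRate α m i = sAux α m i / (Real.Gamma (2 - α) * Real.Gamma α * Real.Gamma (m : ℝ)) := by
  rw [collRate, betaR, sAux]
  have e : (i : ℝ) - α + ((m : ℝ) - (i : ℝ) + α) = (m : ℝ) := by ring
  rw [e]
  ring

lemma totalRate_eq (α : ℝ) (m : ℕ) (hm : 2 ≤ m) :
    totalRate α m = Ssum α m 2 / (Real.Gamma (2 - α) * Real.Gamma α * Real.Gamma (m : ℝ)) := by
  rw [totalRate, Ssum, Finset.sum_div]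
  apply Finset.sum_nbij' (fun l => m - l + 1) (fun i => m - i + 1)
  · intro l hl
    rw [Finset.mem_Ico] at hl
    rw [Finset.mem_Icc]
    omega
  · intro i hi
    rw [Finset.mem_Icc] at hi
    rw [Finset.mem_Ico]
    omega
  · intro l hl
    rw [Finset.mem_Ico] at hl
    omega
  · intro i hi
    rw [Finset.mem_Icc] at hi
    omega
  · intro l hl
    rw [rateML, collRate_eq]

lemma Ssum2_pos {α : ℝ} (hα1 : 1 < α) (hα2 : α < 2) {m : ℕ} (hm : 2 ≤ m) :
    0 < Ssum α m 2 := by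
  rw [Ssum]
  apply Finset.sum_pos
  · intro i hi
    rw [Finset.mem_Icc] at hi
    exact sAux_pos hα1 hα2 hi.1 hi.2
  · exact ⟨2, Finset.mem_Icc.mpr ⟨le_refl 2, hm⟩⟩

end FJD

open FJD

/-- For all integers `m ≥ 2` and `k ≥ 1`, `∑_{j=k}^{m-1} P_{m,m-j} ≤ P(V ≥ k)`:
the first jump of the block-counting chain started from `m` is stochastically dominated
by `V`. -/
theorem first_jump_dominated (α : ℝ) (hα1 : 1 < α) (hα2 : α < 2) (m k : ℕ)
    (hm : 2 ≤ m) (hk : 1 ≤ k) :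
    ∑ j ∈ Finset.Icc k (m - 1), jumpProb α m (m - j) ≤ Vge α k := by
  have hΓ2α : 0 < Real.Gamma (2 - α) := Real.Gamma_pos_of_pos (by linarith)
  have hΓα : 0 < Real.Gamma α := Real.Gamma_pos_of_pos (by linarith)
  have hΓm : 0 < Real.Gamma (m : ℝ) := Real.Gamma_pos_of_pos (by positivity)
  set c : ℝ := Real.Gamma (2 - α) * Real.Gamma α * Real.Gamma (m : ℝ) with hc
  have hcpos : 0 < c := by positivity
  have hS2 : 0 < Ssum α m 2 := Ssum2_pos hα1 hα2 hm
  have h1 : ∑ j ∈ Finset.Icc k (m - 1), jumpProb α m (m - j)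
      = (∑ j ∈ Finset.Icc k (m - 1), sAux α m (j + 1)) / c / totalRate α m := by
    rw [Finset.sum_div, Finset.sum_div]
    apply Finset.sum_congr rfl
    intro j hj
    rw [Finset.mem_Icc] at hj
    have e : m - (m - j) + 1 = j + 1 := by omega
    rw [jumpProb, rateML, e, collRate_eq]
  have h2 : ∑ j ∈ Finset.Icc k (m - 1), sAux α m (j + 1) = Ssum α m (k + 1) := by
    have e : Finset.Icc (k + 1) m = (Finset.Icc k (m - 1)).map (addRightEmbedding 1) := by
      rw [Finset.map_add_right_Icc]
      congr 1
      omega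
    rw [Ssum, e, Finset.sum_map]
    rfl
  rw [h1, h2, totalRate_eq α m hm, ← hc]
  have e3 : Ssum α m (k + 1) / c / (Ssum α m 2 / c) = Ssum α m (k + 1) / Ssum α m 2 := by
    rw [div_div_div_comm, div_self hcpos.ne', div_one]
  rw [e3, Vge_eq hα1 hα2 hk, W]
  have hΓk1 : 0 < Real.Gamma ((k : ℝ) + 1) := Real.Gamma_pos_of_pos (by positivity)
  rw [div_le_div_iff₀ hS2 (by positivity)]
  have h4 := main_ind (m := m) hα1 hα2 hk
  have h5 := mul_le_mul_of_nonneg_right h4 hΓk1.le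
  calc Ssum α m (k + 1) * (Real.Gamma (2 - α) * Real.Gamma ((k : ℝ) + 1))
      = Real.Gamma (2 - α) * Ssum α m (k + 1) * Real.Gamma ((k : ℝ) + 1) := by ring
    _ ≤ Real.Gamma ((k : ℝ) + 1 - α) / Real.Gamma ((k : ℝ) + 1) * Ssum α m 2 * Real.Gamma ((k : ℝ) + 1) := h5
    _ = Real.Gamma ((k : ℝ) + 1 - α) * Ssum α m 2 := by
        field_simp
end
end

section
/- For every integer m ≥ 2, ∑_{k=1}^{∞} (P(V = k) − P_{m,m−k})^+ ≤ 1/((α−1)·m), where x^+ = max(x,0) and with the convention P_{m,m−k} = 0 for k ≥ m. In particular the total variation distance between the law of V and the first-jump law of the chain from m is at most 1/((α−1)·m). -/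
open scoped Classical

noncomputable section

namespace PDB
open Finset Filter

variable {α : ℝ}

def fS (α : ℝ) (k : ℕ) : ℝ := Real.Gamma ((k:ℝ) - α) / Real.Gamma ((k:ℝ) + 1)
def gS (α : ℝ) (k : ℕ) : ℝ := Real.Gamma ((k:ℝ) + α) / Real.Gamma ((k:ℝ) + 1)

lemma sub_ne (hα1 : 1 < α) (hα2 : α < 2) (k : ℕ) : (k:ℝ) - α ≠ 0 := by
  rcases Nat.lt_or_ge k 2 with h | h
  · have hk : (k:ℝ) ≤ 1 := by exact_mod_cast Nat.lt_succ_iff.mp h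
    nlinarith
  · have hk : (2:ℝ) ≤ (k:ℝ) := by exact_mod_cast h
    nlinarith

lemma gammaNat_pos (k : ℕ) : 0 < Real.Gamma ((k:ℝ) + 1) :=
  Real.Gamma_pos_of_pos (by positivity)

lemma fS_rec (hα1 : 1 < α) (hα2 : α < 2) (k : ℕ) :
    ((k:ℝ)+1) * fS α (k+1) = ((k:ℝ) - α) * fS α k := by
  have h1 : ((k:ℝ)+1) ≠ 0 := by positivity
  have h2 := sub_ne hα1 hα2 k
  have h3 := (gammaNat_pos k).ne'
  have e1 : ((k+1:ℕ):ℝ) - α = ((k:ℝ) - α) + 1 := by push_cast; ring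
  have e2 : ((k+1:ℕ):ℝ) + 1 = ((k:ℝ) + 1) + 1 := by push_cast; ring
  rw [fS, fS, e1, e2, Real.Gamma_add_one h2, Real.Gamma_add_one h1]
  field_simp

lemma gS_rec (hα1 : 1 < α) (k : ℕ) :
    ((k:ℝ)+1) * gS α (k+1) = ((k:ℝ) + α) * gS α k := by
  have h1 : ((k:ℝ)+1) ≠ 0 := by positivity
  have h2 : ((k:ℝ) + α) ≠ 0 := by positivity
  have h3 := (gammaNat_pos k).ne'
  have e1 : ((k+1:ℕ):ℝ) + α = ((k:ℝ) + α) + 1 := by push_cast; ring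
  have e2 : ((k+1:ℕ):ℝ) + 1 = ((k:ℝ) + 1) + 1 := by push_cast; ring
  rw [gS, gS, e1, e2, Real.Gamma_add_one h2, Real.Gamma_add_one h1]
  field_simp

def FF (α : ℝ) (m : ℕ) : ℝ := ∑ k ∈ range (m+1), fS α k * gS α (m - k)

lemma FF_succ (hα1 : 1 < α) (hα2 : α < 2) (m : ℕ) :
    ((m:ℝ)+1) * FF α (m+1) = (m:ℝ) * FF α m := by
  have key : ((m:ℝ)+1) * FF α (m+1)
      = (∑ k ∈ range (m+2), (k:ℝ) * (fS α k * gS α (m+1-k)))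
        + (∑ k ∈ range (m+2), ((m+1-k : ℕ):ℝ) * (fS α k * gS α (m+1-k))) := by
    rw [FF, Finset.mul_sum, ← Finset.sum_add_distrib]
    refine Finset.sum_congr rfl fun k hk => ?_
    have hk' : k ≤ m + 1 := Nat.lt_succ_iff.mp (Finset.mem_range.mp hk)
    have hc : ((m+1-k : ℕ):ℝ) = ((m:ℝ)+1) - (k:ℝ) := by
      rw [Nat.cast_sub hk']; push_cast; ring
    rw [hc]; ring
  have s1 : (∑ k ∈ range (m+2), (k:ℝ) * (fS α k * gS α (m+1-k)))
      = ∑ k ∈ range (m+1), ((k:ℝ) - α) * (fS α k * gS α (m - k)) := by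
    rw [Finset.sum_range_succ' (fun k => (k:ℝ) * (fS α k * gS α (m+1-k))) (m+1)]
    simp only [Nat.cast_zero, zero_mul, add_zero]
    refine Finset.sum_congr rfl fun i _ => ?_
    have e : m + 1 - (i+1) = m - i := by omega
    rw [e]
    push_cast
    linear_combination gS α (m - i) * (fS_rec hα1 hα2 i)
  have s2 : (∑ k ∈ range (m+2), ((m+1-k : ℕ):ℝ) * (fS α k * gS α (m+1-k)))
      = ∑ k ∈ range (m+1), (((m-k:ℕ):ℝ) + α) * (fS α k * gS α (m - k)) := by
    rw [Finset.sum_range_succ]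
    simp only [Nat.sub_self, Nat.cast_zero, zero_mul, add_zero]
    refine Finset.sum_congr rfl fun k hk => ?_
    have e : m + 1 - k = (m - k) + 1 := by
      have := Nat.lt_succ_iff.mp (Finset.mem_range.mp hk); omega
    rw [e]
    push_cast
    linear_combination fS α k * (gS_rec hα1 (m - k))
  rw [key, s1, s2, ← Finset.sum_add_distrib, FF, Finset.mul_sum]
  refine Finset.sum_congr rfl fun k hk => ?_
  have hk' : k ≤ m := Nat.lt_succ_iff.mp (Finset.mem_range.mp hk)
  have hc : ((m-k : ℕ):ℝ) = (m:ℝ) - (k:ℝ) := by rw [Nat.cast_sub hk']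
  rw [hc]; ring

lemma FF_zero (hα1 : 1 < α) (hα2 : α < 2) : ∀ m, 1 ≤ m → FF α m = 0 := by
  intro m hm
  induction m with
  | zero => omega
  | succ n ih =>
    have h := FF_succ hα1 hα2 n
    have hne : ((n:ℝ)+1) ≠ 0 := by positivity
    rcases Nat.eq_zero_or_pos n with h0 | h0
    · subst h0
      simp only [Nat.cast_zero, zero_mul, zero_add] at h
      simpa using h
    · rw [ih h0, mul_zero] at h
      exact (mul_eq_zero.mp h).resolve_left hne


-- collRate in terms of fS, gS
lemma collRate_eq (hα1 : 1 < α) (hα2 : α < 2) {m k : ℕ} (hm : 1 ≤ m) (hk : k ≤ m) :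
    collRate α m k = (m:ℝ) * fS α k * gS α (m - k) / (Real.Gamma (2-α) * Real.Gamma α) := by
  have hc : ((m-k : ℕ):ℝ) = (m:ℝ) - (k:ℝ) := by rw [Nat.cast_sub hk]
  have e1 : (k:ℝ) - α + ((m:ℝ) - (k:ℝ) + α) = ((m-1:ℕ):ℝ) + 1 := by
    rw [Nat.cast_sub hm]; push_cast; ring
  rw [collRate, betaR, fS, gS, hc, e1, Real.Gamma_nat_eq_factorial]
  have e2 : Real.Gamma ((k:ℝ) + 1) = (k.factorial : ℝ) := Real.Gamma_nat_eq_factorial k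
  have e3 : Real.Gamma ((m:ℝ) - (k:ℝ) + 1) = ((m-k).factorial : ℝ) := by
    rw [← hc]; exact Real.Gamma_nat_eq_factorial (m-k)
  rw [e2, e3]
  have hC : ((m.choose k : ℕ):ℝ) = (m.factorial : ℝ) / ((k.factorial : ℝ) * ((m-k).factorial : ℝ)) :=
    Nat.cast_choose ℝ hk
  have hg1 : Real.Gamma (2-α) ≠ 0 := (Real.Gamma_pos_of_pos (by linarith)).ne'
  have hg2 : Real.Gamma α ≠ 0 := (Real.Gamma_pos_of_pos (by linarith)).ne'
  have hmf : (m:ℝ) * ((m-1).factorial : ℝ) = (m.factorial : ℝ) := by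
    exact_mod_cast Nat.mul_factorial_pred (by omega)
  have n1 : ((m-1).factorial : ℝ) ≠ 0 := by positivity
  have n2 : (k.factorial : ℝ) ≠ 0 := by positivity
  have n3 : ((m-k).factorial : ℝ) ≠ 0 := by positivity
  rw [hC]
  field_simp
  linear_combination (-(Real.Gamma ((k:ℝ) - α) * Real.Gamma ((m:ℝ) - (k:ℝ) + α))) * hmf

lemma gamma_pos_mk (hα1 : 1 < α) {m : ℕ} (hm : 1 ≤ m) : 0 < Real.Gamma ((m:ℝ) - 1 + α) := by
  have : (1:ℝ) ≤ (m:ℝ) := by exact_mod_cast hm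
  exact Real.Gamma_pos_of_pos (by linarith)

lemma gammaM_pos {m : ℕ} (hm : 1 ≤ m) : 0 < Real.Gamma ((m:ℝ)) := by
  have : (1:ℝ) ≤ (m:ℝ) := by exact_mod_cast hm
  exact Real.Gamma_pos_of_pos (by linarith)

lemma totalRate_eq (hα1 : 1 < α) (hα2 : α < 2) {m : ℕ} (hm : 2 ≤ m) :
    totalRate α m = ((m:ℝ) - 1) * Real.Gamma ((m:ℝ) - 1 + α) /
      (α * Real.Gamma α * Real.Gamma (m:ℝ)) := by
  have hg1 : Real.Gamma (2-α) ≠ 0 := (Real.Gamma_pos_of_pos (by linarith)).ne'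
  have hg2 : Real.Gamma α ≠ 0 := (Real.Gamma_pos_of_pos (by linarith)).ne'
  have hm1 : (1:ℕ) ≤ m := by omega
  have step1 : totalRate α m = ∑ k ∈ Ico 2 (m+1), collRate α m k := by
    rw [totalRate]
    refine Finset.sum_nbij' (fun l => m - l + 1) (fun k => m - k + 1) ?_ ?_ ?_ ?_ ?_
    · intro a ha; simp only [Finset.mem_Ico] at *; omega
    · intro a ha; simp only [Finset.mem_Ico] at *; omega
    · intro a ha; simp only [Finset.mem_Ico] at ha; show m - (m - a + 1) + 1 = a; omega
    · intro a ha; simp only [Finset.mem_Ico] at ha; show m - (m - a + 1) + 1 = a; omega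
    · intro a _; rfl
  have step2 : ∑ k ∈ Ico 2 (m+1), collRate α m k
      = ((m:ℝ) / (Real.Gamma (2-α) * Real.Gamma α)) * ∑ k ∈ Ico 2 (m+1), fS α k * gS α (m-k) := by
    rw [Finset.mul_sum]
    refine Finset.sum_congr rfl fun k hk => ?_
    simp only [Finset.mem_Ico] at hk
    rw [collRate_eq hα1 hα2 hm1 (by omega : k ≤ m)]
    ring
  have step3 : ∑ k ∈ Ico 2 (m+1), fS α k * gS α (m-k)
      = - (fS α 0 * gS α m) - fS α 1 * gS α (m-1) := by
    have hFF : FF α m = 0 := FF_zero hα1 hα2 m (by omega)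
    have hsplit : FF α m = fS α 0 * gS α (m - 0) + fS α 1 * gS α (m-1)
        + ∑ k ∈ Ico 2 (m+1), fS α k * gS α (m-k) := by
      rw [FF, Finset.range_eq_Ico,
        ← Finset.sum_Ico_consecutive _ (by omega : 0 ≤ 2) (by omega : 2 ≤ m+1)]
      congr 1
      have h02 : Finset.Ico 0 2 = {0, 1} := rfl
      rw [h02, Finset.sum_insert (by simp), Finset.sum_singleton]
    rw [hsplit] at hFF
    simp only [Nat.sub_zero] at hFF
    linarith
  rw [step1, step2, step3]
  have e0 : fS α 0 = Real.Gamma (-α) := by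
    simp [fS, Real.Gamma_one]
  have e1 : fS α 1 = Real.Gamma (1-α) := by
    simp [fS, show (1:ℝ) + 1 = (2:ℝ) by norm_num, Real.Gamma_two,
      show ((1:ℕ):ℝ) - α = 1 - α by push_cast; ring]
  have e2 : gS α m = Real.Gamma ((m:ℝ) + α) / Real.Gamma ((m:ℝ)+1) := rfl
  have e3 : gS α (m-1) = Real.Gamma ((m:ℝ) - 1 + α) / Real.Gamma ((m:ℝ)) := by
    have hc : ((m-1:ℕ):ℝ) = (m:ℝ) - 1 := by rw [Nat.cast_sub hm1]; norm_num
    rw [gS, hc]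
    norm_num
  rw [e0, e1, e2, e3]
  -- Gamma recurrences
  have hne1 : (1 - α) ≠ 0 := by linarith
  have hne2 : (-α) ≠ 0 := by linarith
  have hne3 : ((m:ℝ) - 1 + α) ≠ 0 := by
    have : (2:ℝ) ≤ (m:ℝ) := by exact_mod_cast hm
    nlinarith
  have hne4 : (m:ℝ) ≠ 0 := by positivity
  have r1 : Real.Gamma (2 - α) = (1-α) * Real.Gamma (1-α) := by
    have : (2:ℝ) - α = (1-α) + 1 := by ring
    rw [this, Real.Gamma_add_one hne1]
  have r2 : Real.Gamma (1 - α) = (-α) * Real.Gamma (-α) := by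
    have : (1:ℝ) - α = (-α) + 1 := by ring
    rw [this, Real.Gamma_add_one hne2]
  have r3 : Real.Gamma ((m:ℝ) + α) = ((m:ℝ) - 1 + α) * Real.Gamma ((m:ℝ) - 1 + α) := by
    have : (m:ℝ) + α = ((m:ℝ) - 1 + α) + 1 := by ring
    rw [this, Real.Gamma_add_one hne3]
  have r4 : Real.Gamma ((m:ℝ) + 1) = (m:ℝ) * Real.Gamma ((m:ℝ)) := Real.Gamma_add_one hne4
  have hGm : Real.Gamma ((m:ℝ)) ≠ 0 := (gammaM_pos hm1).ne'
  have hG1a : Real.Gamma (1-α) ≠ 0 := by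
    intro h; rw [h, mul_zero] at r1; exact hg1 r1
  have hGna : Real.Gamma (-α) ≠ 0 := by
    intro h; rw [h, mul_zero] at r2; exact hG1a r2
  have hα0 : α ≠ 0 := by linarith
  rw [r3, r4]
  rw [r2] at r1
  rw [r2, r1]
  field_simp
  ring

lemma jump_eq (hα1 : 1 < α) (hα2 : α < 2) {m k n : ℕ} (hk : 1 ≤ k) (hn : 1 ≤ n)
    (h : k + n = m) :
    jumpProb α m n = Vpmf α k * ((m:ℝ)/((m:ℝ)-1)) *
      (Real.Gamma ((n:ℝ) - 1 + α) * Real.Gamma ((m:ℝ)) /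
        (Real.Gamma ((n:ℝ)) * Real.Gamma ((m:ℝ) - 1 + α))) := by
  have hm : 2 ≤ m := by omega
  have hg1 : Real.Gamma (2-α) ≠ 0 := (Real.Gamma_pos_of_pos (by linarith)).ne'
  have hg2 : Real.Gamma α ≠ 0 := (Real.Gamma_pos_of_pos (by linarith)).ne'
  have e1 : m - n + 1 = k + 1 := by omega
  rw [jumpProb, rateML, e1, collRate_eq hα1 hα2 (by omega : 1 ≤ m) (by omega : k + 1 ≤ m),
    totalRate_eq hα1 hα2 hm]
  have e2 : m - (k+1) = n - 1 := by omega
  rw [e2]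
  have efS : fS α (k+1) = Real.Gamma ((k:ℝ) + 1 - α) / Real.Gamma ((k:ℝ) + 2) := by
    rw [fS]; push_cast; norm_num; ring_nf
  have egS : gS α (n-1) = Real.Gamma ((n:ℝ) - 1 + α) / Real.Gamma ((n:ℝ)) := by
    have hc : ((n-1:ℕ):ℝ) = (n:ℝ) - 1 := by rw [Nat.cast_sub hn]; norm_num
    rw [gS, hc]; norm_num
  rw [efS, egS, Vpmf]
  have hGm : Real.Gamma ((m:ℝ)) ≠ 0 := (gammaM_pos (by omega)).ne'
  have hGma : Real.Gamma ((m:ℝ) - 1 + α) ≠ 0 := (gamma_pos_mk hα1 (by omega)).ne'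
  have hGn : Real.Gamma ((n:ℝ)) ≠ 0 := (gammaM_pos hn).ne'
  have hGk2 : Real.Gamma ((k:ℝ) + 2) ≠ 0 := by
    have : (0:ℝ) < (k:ℝ) + 2 := by positivity
    exact (Real.Gamma_pos_of_pos this).ne'
  have hm1 : ((m:ℝ) - 1) ≠ 0 := by
    have : (2:ℝ) ≤ (m:ℝ) := by exact_mod_cast hm
    nlinarith
  have hα0 : α ≠ 0 := by linarith
  field_simp

lemma W_ge (hα1 : 1 < α) (hα2 : α < 2) {n : ℕ} (hn : 1 ≤ n) :
    ∀ m, n ≤ m → (n:ℝ) * Real.Gamma ((n:ℝ)) * Real.Gamma ((m:ℝ) - 1 + α)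
      ≤ (m:ℝ) * Real.Gamma ((n:ℝ) - 1 + α) * Real.Gamma ((m:ℝ)) := by
  refine Nat.le_induction ?_ ?_
  · have : (n:ℝ) * Real.Gamma ((n:ℝ)) * Real.Gamma ((n:ℝ) - 1 + α)
        = (n:ℝ) * Real.Gamma ((n:ℝ) - 1 + α) * Real.Gamma ((n:ℝ)) := by ring
    exact le_of_eq this
  · intro m hm ih
    have hm1 : 1 ≤ m := le_trans hn hm
    have hmR : (1:ℝ) ≤ (m:ℝ) := by exact_mod_cast hm1
    have hGm : 0 < Real.Gamma ((m:ℝ)) := gammaM_pos hm1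
    have hGma : 0 < Real.Gamma ((m:ℝ) - 1 + α) := gamma_pos_mk hα1 hm1
    have hGna : 0 < Real.Gamma ((n:ℝ) - 1 + α) := gamma_pos_mk hα1 hn
    have hGn : 0 < Real.Gamma ((n:ℝ)) := gammaM_pos hn
    have hnR : (1:ℝ) ≤ (n:ℝ) := by exact_mod_cast hn
    have c1 : ((m+1:ℕ):ℝ) = (m:ℝ) + 1 := by push_cast; ring
    have r4 : Real.Gamma ((m:ℝ) + 1) = (m:ℝ) * Real.Gamma ((m:ℝ)) :=
      Real.Gamma_add_one (by positivity)
    have hne3 : ((m:ℝ) - 1 + α) ≠ 0 := by nlinarith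
    have r3 : Real.Gamma ((m:ℝ) + 1 - 1 + α) = ((m:ℝ) - 1 + α) * Real.Gamma ((m:ℝ) - 1 + α) := by
      have e : (m:ℝ) + 1 - 1 + α = ((m:ℝ) - 1 + α) + 1 := by ring
      rw [e, Real.Gamma_add_one hne3]
    rw [c1, r4, r3]
    have hle : (m:ℝ) - 1 + α ≤ (m:ℝ) + 1 := by linarith
    nlinarith [mul_pos hGna hGm, mul_le_mul_of_nonneg_left ih (by linarith : (0:ℝ) ≤ (m:ℝ) + 1),
      mul_pos (mul_pos (by linarith : (0:ℝ) < (m:ℝ)) hGna) hGm]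

lemma Vpmf_pos (hα1 : 1 < α) (hα2 : α < 2) {k : ℕ} (hk : 1 ≤ k) : 0 < Vpmf α k := by
  have h1 : (0:ℝ) < 2 - α := by linarith
  have hkR : (1:ℝ) ≤ (k:ℝ) := by exact_mod_cast hk
  have h2 : (0:ℝ) < (k:ℝ) + 1 - α := by linarith
  have := Real.Gamma_pos_of_pos h1
  have := Real.Gamma_pos_of_pos h2
  have := Real.Gamma_pos_of_pos (show (0:ℝ) < (k:ℝ) + 2 by positivity)
  rw [Vpmf]
  positivity

lemma key_bound (hα1 : 1 < α) (hα2 : α < 2) {m k : ℕ} (hk : 1 ≤ k) (hkm : k < m) :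
    Vpmf α k - jumpProb α m (m - k) ≤ Vpmf α k * (k:ℝ) / (m:ℝ) := by
  set n := m - k with hn
  have hn1 : 1 ≤ n := by omega
  have hkn : k + n = m := by omega
  have hV : 0 < Vpmf α k := Vpmf_pos hα1 hα2 hk
  have hGm : 0 < Real.Gamma ((m:ℝ)) := gammaM_pos (by omega)
  have hGma : 0 < Real.Gamma ((m:ℝ) - 1 + α) := gamma_pos_mk hα1 (by omega)
  have hGna : 0 < Real.Gamma ((n:ℝ) - 1 + α) := gamma_pos_mk hα1 hn1
  have hGn : 0 < Real.Gamma ((n:ℝ)) := gammaM_pos hn1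
  have hmR : (2:ℝ) ≤ (m:ℝ) := by exact_mod_cast (by omega : 2 ≤ m)
  have hnR : (1:ℝ) ≤ (n:ℝ) := by exact_mod_cast hn1
  have hW : (n:ℝ) / (m:ℝ) ≤ Real.Gamma ((n:ℝ) - 1 + α) * Real.Gamma ((m:ℝ)) /
      (Real.Gamma ((n:ℝ)) * Real.Gamma ((m:ℝ) - 1 + α)) := by
    rw [div_le_div_iff₀ (by linarith) (by positivity)]
    calc (n:ℝ) * (Real.Gamma ((n:ℝ)) * Real.Gamma ((m:ℝ) - 1 + α))
        = (n:ℝ) * Real.Gamma ((n:ℝ)) * Real.Gamma ((m:ℝ) - 1 + α) := by ring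
      _ ≤ (m:ℝ) * Real.Gamma ((n:ℝ) - 1 + α) * Real.Gamma ((m:ℝ)) :=
          W_ge hα1 hα2 hn1 m (by omega)
      _ = Real.Gamma ((n:ℝ) - 1 + α) * Real.Gamma ((m:ℝ)) * (m:ℝ) := by ring
  have hjump : Vpmf α k * ((n:ℝ)/(m:ℝ)) ≤ jumpProb α m n := by
    rw [jump_eq hα1 hα2 hk hn1 hkn]
    have step1 : Vpmf α k * ((n:ℝ)/(m:ℝ)) ≤ Vpmf α k * ((m:ℝ)/((m:ℝ)-1)) * ((n:ℝ)/(m:ℝ)) := by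
      have h1 : (1:ℝ) ≤ (m:ℝ)/((m:ℝ)-1) := by
        rw [le_div_iff₀ (by linarith)]; linarith
      nlinarith [mul_nonneg hV.le (by positivity : (0:ℝ) ≤ (n:ℝ)/(m:ℝ))]
    calc Vpmf α k * ((n:ℝ)/(m:ℝ)) ≤ Vpmf α k * ((m:ℝ)/((m:ℝ)-1)) * ((n:ℝ)/(m:ℝ)) := step1
      _ ≤ Vpmf α k * ((m:ℝ)/((m:ℝ)-1)) *
          (Real.Gamma ((n:ℝ) - 1 + α) * Real.Gamma ((m:ℝ)) /
            (Real.Gamma ((n:ℝ)) * Real.Gamma ((m:ℝ) - 1 + α))) := by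
          have hpos : (0:ℝ) ≤ Vpmf α k * ((m:ℝ)/((m:ℝ)-1)) := by
            have h0 : (0:ℝ) < (m:ℝ)/((m:ℝ)-1) := div_pos (by linarith) (by linarith)
            exact mul_nonneg hV.le h0.le
          exact mul_le_mul_of_nonneg_left hW hpos
  have hcast : ((n:ℕ):ℝ) = (m:ℝ) - (k:ℝ) := by
    rw [hn, Nat.cast_sub (by omega : k ≤ m)]
  have := hjump
  rw [hcast] at this
  have hexp : Vpmf α k * (((m:ℝ) - (k:ℝ))/(m:ℝ)) = Vpmf α k - Vpmf α k * (k:ℝ)/(m:ℝ) := by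
    field_simp
  rw [hexp] at this
  linarith


def pp (α : ℝ) (k : ℕ) : ℝ := if 1 ≤ k then Vpmf α k else 0

def TT (α : ℝ) (k : ℕ) : ℝ := Real.Gamma ((k:ℝ) + 1 - α) / (Real.Gamma (2 - α) * Real.Gamma ((k:ℝ) + 1))

def UU (α : ℝ) (k : ℕ) : ℝ :=
  α / Real.Gamma (2 - α) * ((k:ℝ)/(α - 1) - 1/α) * (Real.Gamma ((k:ℝ) + 1 - α) / Real.Gamma ((k:ℝ) + 1))

lemma gamma_rec_k (hα1 : 1 < α) (hα2 : α < 2) (k : ℕ) :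
    Real.Gamma (((k+1:ℕ):ℝ) + 1 - α) = ((k:ℝ) + 1 - α) * Real.Gamma ((k:ℝ) + 1 - α) := by
  have hne : ((k:ℝ) + 1 - α) ≠ 0 := by
    have := sub_ne hα1 hα2 (k+1); push_cast at this; convert this using 2 <;> push_cast <;> ring
  have e : ((k+1:ℕ):ℝ) + 1 - α = ((k:ℝ) + 1 - α) + 1 := by push_cast; ring
  rw [e, Real.Gamma_add_one hne]

lemma gamma_rec_k' (k : ℕ) :
    Real.Gamma (((k+1:ℕ):ℝ) + 1) = ((k:ℝ) + 1) * Real.Gamma ((k:ℝ) + 1) := by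
  have e : ((k+1:ℕ):ℝ) + 1 = ((k:ℝ) + 1) + 1 := by push_cast; ring
  rw [e, Real.Gamma_add_one (by positivity)]

lemma Vpmf_telescope (hα1 : 1 < α) (hα2 : α < 2) (k : ℕ) :
    Vpmf α k = TT α k - TT α (k+1) := by
  have hg1 : Real.Gamma (2-α) ≠ 0 := (Real.Gamma_pos_of_pos (by linarith)).ne'
  have h1 := (gammaNat_pos k).ne'
  have h2 := (gammaNat_pos (k+1)).ne'
  rw [Vpmf, TT, TT, gamma_rec_k hα1 hα2, gamma_rec_k']
  have e2 : Real.Gamma ((k:ℝ) + 2) = ((k:ℝ)+1) * Real.Gamma ((k:ℝ)+1) := by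
    have e : (k:ℝ) + 2 = ((k:ℝ) + 1) + 1 := by ring
    rw [e, Real.Gamma_add_one (by positivity)]
  rw [e2]
  push_cast at h2 ⊢
  field_simp
  ring

lemma kVpmf_telescope (hα1 : 1 < α) (hα2 : α < 2) (k : ℕ) :
    (k:ℝ) * Vpmf α k = UU α k - UU α (k+1) := by
  have hg1 : Real.Gamma (2-α) ≠ 0 := (Real.Gamma_pos_of_pos (by linarith)).ne'
  have h1 := (gammaNat_pos k).ne'
  have h2 := (gammaNat_pos (k+1)).ne'
  have hα0 : α ≠ 0 := by linarith
  have hα1' : α - 1 ≠ 0 := by intro h; nlinarith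
  rw [Vpmf, UU, UU, gamma_rec_k hα1 hα2, gamma_rec_k']
  have e2 : Real.Gamma ((k:ℝ) + 2) = ((k:ℝ)+1) * Real.Gamma ((k:ℝ)+1) := by
    have e : (k:ℝ) + 2 = ((k:ℝ) + 1) + 1 := by ring
    rw [e, Real.Gamma_add_one (by positivity)]
  rw [e2]
  push_cast at h2 ⊢
  field_simp
  ring

lemma TT_one (hα1 : 1 < α) (hα2 : α < 2) : TT α 1 = 1 := by
  have hg1 : Real.Gamma (2-α) ≠ 0 := (Real.Gamma_pos_of_pos (by linarith)).ne'
  rw [TT]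
  have e1 : ((1:ℕ):ℝ) + 1 - α = 2 - α := by push_cast; ring
  have e2 : ((1:ℕ):ℝ) + 1 = 2 := by push_cast; ring
  rw [e1, e2, Real.Gamma_two]
  field_simp

lemma sum_pp (hα1 : 1 < α) (hα2 : α < 2) (N : ℕ) :
    ∑ k ∈ range (N+1), pp α k = 1 - TT α (N+1) := by
  rw [Finset.sum_range_succ' (pp α) N]
  have h0 : pp α 0 = 0 := by simp [pp]
  rw [h0, add_zero]
  have : ∀ i, pp α (i+1) = TT α (i+1) - TT α (i+2) := by
    intro i
    rw [pp, if_pos (by omega)]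
    exact Vpmf_telescope hα1 hα2 (i+1)
  calc ∑ i ∈ range N, pp α (i+1) = ∑ i ∈ range N, ((fun j => TT α (j+1)) i - (fun j => TT α (j+1)) (i+1)) := by
        refine Finset.sum_congr rfl fun i _ => ?_
        simpa using this i
    _ = TT α 1 - TT α (N+1) := Finset.sum_range_sub' (fun j => TT α (j+1)) N
    _ = 1 - TT α (N+1) := by rw [TT_one hα1 hα2]

lemma TT_nonneg (hα1 : 1 < α) (hα2 : α < 2) {k : ℕ} (hk : 1 ≤ k) : 0 ≤ TT α k := by
  have hkR : (1:ℝ) ≤ (k:ℝ) := by exact_mod_cast hk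
  have h1 : (0:ℝ) < (k:ℝ) + 1 - α := by linarith
  have := Real.Gamma_pos_of_pos h1
  have := Real.Gamma_pos_of_pos (show (0:ℝ) < 2 - α by linarith)
  have := gammaNat_pos k
  rw [TT]; positivity

lemma TT_le (hα1 : 1 < α) (hα2 : α < 2) : ∀ k : ℕ, 1 ≤ k → (k:ℝ) * TT α k ≤ 1 := by
  have hg2 : (0:ℝ) < Real.Gamma (2-α) := Real.Gamma_pos_of_pos (by linarith)
  have main : ∀ k : ℕ, 1 ≤ k → (k:ℝ) * Real.Gamma ((k:ℝ) + 1 - α) ≤ Real.Gamma (2-α) * Real.Gamma ((k:ℝ)+1) := by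
    refine Nat.le_induction ?_ ?_
    · have e1 : ((1:ℕ):ℝ) + 1 - α = 2 - α := by push_cast; ring
      have e2 : ((1:ℕ):ℝ) + 1 = 2 := by push_cast; ring
      rw [e1, e2, Real.Gamma_two]
      norm_num
    · intro k hk ih
      have hkR : (1:ℝ) ≤ (k:ℝ) := by exact_mod_cast hk
      have hGa : 0 < Real.Gamma ((k:ℝ) + 1 - α) := Real.Gamma_pos_of_pos (by linarith)
      rw [gamma_rec_k hα1 hα2 k, gamma_rec_k' k]
      push_cast
      have h3 : (0:ℝ) ≤ ((k:ℝ)+1) * Real.Gamma ((k:ℝ)+1-α) := by positivity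
      have h4 : ((k:ℝ)+1-α) ≤ (k:ℝ) := by linarith
      nlinarith [mul_le_mul_of_nonneg_left ih (by linarith : (0:ℝ) ≤ (k:ℝ)+1),
        mul_le_mul_of_nonneg_left h4 h3]
  intro k hk
  have hkR : (1:ℝ) ≤ (k:ℝ) := by exact_mod_cast hk
  have h := main k hk
  rw [TT, ← mul_div_assoc, div_le_one (mul_pos hg2 (gammaNat_pos k))]
  exact h

lemma pp_nonneg (hα1 : 1 < α) (hα2 : α < 2) (k : ℕ) : 0 ≤ pp α k := by
  rw [pp]
  split
  · rename_i h
    have hkR : (1:ℝ) ≤ (k:ℝ) := by exact_mod_cast h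
    have h1 := Real.Gamma_pos_of_pos (show (0:ℝ) < (k:ℝ) + 1 - α by linarith)
    have h2 := Real.Gamma_pos_of_pos (show (0:ℝ) < 2 - α by linarith)
    have h3 := Real.Gamma_pos_of_pos (show (0:ℝ) < (k:ℝ) + 2 by positivity)
    rw [Vpmf]; positivity
  · exact le_refl 0

lemma summable_pp (hα1 : 1 < α) (hα2 : α < 2) : Summable (pp α) := by
  apply summable_of_sum_range_le (c := 1) (pp_nonneg hα1 hα2)
  intro n
  cases n with
  | zero => simp
  | succ N =>
    rw [sum_pp hα1 hα2 N]
    have := TT_nonneg hα1 hα2 (show 1 ≤ N+1 by omega)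
    linarith

lemma tsum_pp (hα1 : 1 < α) (hα2 : α < 2) : ∑' k, pp α k = 1 := by
  have hTT : Tendsto (fun n : ℕ => TT α n) atTop (nhds 0) := by
    refine squeeze_zero' (Filter.eventually_atTop.mpr ⟨1, fun n hn => TT_nonneg hα1 hα2 hn⟩)
      (Filter.eventually_atTop.mpr ⟨1, fun n hn => ?_⟩) tendsto_one_div_atTop_nhds_zero_nat
    have hnR : (0:ℝ) < (n:ℝ) := by exact_mod_cast hn
    have h := TT_le hα1 hα2 n hn
    rw [le_div_iff₀ hnR]
    nlinarith
  have h1 : Tendsto (fun n : ℕ => ∑ k ∈ range n, pp α k) atTop (nhds 1) := by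
    have h2 : Tendsto (fun n : ℕ => 1 - TT α n) atTop (nhds 1) := by
      simpa using (tendsto_const_nhds (α := ℕ) (f := atTop) (x := (1:ℝ))).sub hTT
    refine h2.congr' ?_
    filter_upwards [Filter.eventually_atTop.mpr ⟨1, fun (n:ℕ) hn => hn⟩] with n hn
    obtain ⟨N, rfl⟩ : ∃ N, n = N + 1 := ⟨n - 1, by omega⟩
    exact (sum_pp hα1 hα2 N).symm
  exact tendsto_nhds_unique ((summable_pp hα1 hα2).hasSum.tendsto_sum_nat) h1

lemma UU_zero (hα1 : 1 < α) (hα2 : α < 2) : UU α 0 = 1/(α-1) := by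
  have hne1 : (1 - α) ≠ 0 := by intro h; nlinarith
  have r1 : Real.Gamma (2 - α) = (1-α) * Real.Gamma (1-α) := by
    have e : (2:ℝ) - α = (1-α) + 1 := by ring
    rw [e, Real.Gamma_add_one hne1]
  have hg1 : Real.Gamma (2-α) ≠ 0 := (Real.Gamma_pos_of_pos (by linarith)).ne'
  have hG1a : Real.Gamma (1-α) ≠ 0 := by
    intro h; rw [h, mul_zero] at r1; exact hg1 r1
  have hα0 : α ≠ 0 := by linarith
  have hα1' : α - 1 ≠ 0 := by intro h; nlinarith
  rw [UU]
  have e1 : ((0:ℕ):ℝ) + 1 - α = 1 - α := by push_cast; ring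
  have e2 : ((0:ℕ):ℝ) + 1 = 1 := by push_cast; ring
  rw [e1, e2, Real.Gamma_one, r1]
  push_cast
  field_simp
  ring

lemma UU_nonneg (hα1 : 1 < α) (hα2 : α < 2) (k : ℕ) : 0 ≤ UU α k := by
  rcases Nat.eq_zero_or_pos k with h0 | h0
  · subst h0
    rw [UU_zero hα1 hα2]
    have : (0:ℝ) < α - 1 := by linarith
    positivity
  · have hkR : (1:ℝ) ≤ (k:ℝ) := by exact_mod_cast h0
    have hg2 : (0:ℝ) < Real.Gamma (2-α) := Real.Gamma_pos_of_pos (by linarith)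
    have hGa : 0 < Real.Gamma ((k:ℝ) + 1 - α) := Real.Gamma_pos_of_pos (by linarith)
    have hGk := gammaNat_pos k
    rw [UU]
    have hmid : 0 ≤ (k:ℝ)/(α-1) - 1/α := by
      rw [sub_nonneg, div_le_div_iff₀ (by linarith) (by linarith)]
      nlinarith
    positivity

lemma sum_kV_le (hα1 : 1 < α) (hα2 : α < 2) (N : ℕ) :
    ∑ k ∈ range N, (k:ℝ) * Vpmf α k ≤ 1/(α-1) := by
  have : ∑ k ∈ range N, (k:ℝ) * Vpmf α k = UU α 0 - UU α N := by
    calc ∑ k ∈ range N, (k:ℝ) * Vpmf α k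
        = ∑ k ∈ range N, (UU α k - UU α (k+1)) :=
          Finset.sum_congr rfl fun k _ => kVpmf_telescope hα1 hα2 k
      _ = UU α 0 - UU α N := Finset.sum_range_sub' (UU α) N
  rw [this, UU_zero hα1 hα2]
  have := UU_nonneg hα1 hα2 N
  linarith


def qq (α : ℝ) (m k : ℕ) : ℝ := if 1 ≤ k ∧ k ≤ m - 1 then jumpProb α m (m - k) else 0

lemma totalRate_pos (hα1 : 1 < α) (hα2 : α < 2) {m : ℕ} (hm : 2 ≤ m) :
    0 < totalRate α m := by
  rw [totalRate_eq hα1 hα2 hm]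
  have h1 : (0:ℝ) < (m:ℝ) - 1 := by
    have : (2:ℝ) ≤ (m:ℝ) := by exact_mod_cast hm
    linarith
  have h2 := gamma_pos_mk hα1 (show 1 ≤ m by omega)
  have h3 := gammaM_pos (show 1 ≤ m by omega)
  have h4 : (0:ℝ) < α := by linarith
  have h5 := Real.Gamma_pos_of_pos h4
  positivity

lemma qq_zero {m : ℕ} : ∀ k, k ∉ Finset.Ico 1 m → qq α m k = 0 := by
  intro k hk
  rw [Finset.mem_Ico] at hk
  rw [qq, if_neg]
  rintro ⟨h1, h2⟩
  exact hk ⟨h1, by omega⟩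

lemma tsum_qq (hα1 : 1 < α) (hα2 : α < 2) {m : ℕ} (hm : 2 ≤ m) : ∑' k, qq α m k = 1 := by
  rw [tsum_eq_sum (qq_zero (m := m))]
  have step1 : ∑ k ∈ Ico 1 m, qq α m k = ∑ k ∈ Ico 1 m, jumpProb α m (m - k) := by
    refine Finset.sum_congr rfl fun k hk => ?_
    rw [Finset.mem_Ico] at hk
    rw [qq, if_pos ⟨hk.1, by omega⟩]
  have step2 : ∑ k ∈ Ico 1 m, jumpProb α m (m - k) = ∑ l ∈ Ico 1 m, jumpProb α m l := by
    refine Finset.sum_nbij' (fun k => m - k) (fun l => m - l) ?_ ?_ ?_ ?_ ?_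
    · intro a ha; simp only [Finset.mem_Ico] at *; omega
    · intro a ha; simp only [Finset.mem_Ico] at *; omega
    · intro a ha; simp only [Finset.mem_Ico] at ha; show m - (m - a) = a; omega
    · intro a ha; simp only [Finset.mem_Ico] at ha; show m - (m - a) = a; omega
    · intro a _; rfl
  rw [step1, step2]
  have : ∑ l ∈ Ico 1 m, jumpProb α m l = (∑ l ∈ Ico 1 m, rateML α m l) / totalRate α m := by
    rw [Finset.sum_div]; rfl
  rw [this, ← totalRate, div_self (totalRate_pos hα1 hα2 hm).ne']

lemma qq_nonneg (hα1 : 1 < α) (hα2 : α < 2) {m : ℕ} (hm : 2 ≤ m) (k : ℕ) :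
    0 ≤ qq α m k := by
  rw [qq]
  split
  · rename_i h
    obtain ⟨h1, h2⟩ := h
    have hn : 1 ≤ m - k := by omega
    have hkn : k + (m - k) = m := by omega
    rw [jump_eq hα1 hα2 h1 hn hkn]
    have v := Vpmf_pos hα1 hα2 h1
    have g1 := gamma_pos_mk hα1 hn
    have g2 := gammaM_pos (show 1 ≤ m by omega)
    have g3 := gammaM_pos hn
    have g4 := gamma_pos_mk hα1 (show 1 ≤ m by omega)
    have hm1 : (0:ℝ) < (m:ℝ) - 1 := by
      have : (2:ℝ) ≤ (m:ℝ) := by exact_mod_cast hm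
      linarith
    have : (0:ℝ) < (m:ℝ) / ((m:ℝ)-1) := div_pos (by linarith) hm1
    positivity
  · exact le_refl 0

theorem main (α : ℝ) (hα1 : 1 < α) (hα2 : α < 2) (m : ℕ) (hm : 2 ≤ m) :
    (∑' k : ℕ, if 1 ≤ k then
        max (Vpmf α k - (if k ≤ m - 1 then jumpProb α m (m - k) else 0)) 0 else 0)
      ≤ 1 / ((α - 1) * m) ∧
    ∀ A : Set ℕ,
      |(∑' k : ℕ, if k ∈ A ∧ 1 ≤ k then Vpmf α k else 0)
        - (∑' k : ℕ, if k ∈ A ∧ 1 ≤ k ∧ k ≤ m - 1 then jumpProb α m (m - k) else 0)|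
      ≤ 1 / ((α - 1) * m) := by
  have hα1' : (0:ℝ) < α - 1 := by linarith
  have hmR : (2:ℝ) ≤ (m:ℝ) := by exact_mod_cast hm
  have hB : (0:ℝ) ≤ 1 / ((α - 1) * m) := by positivity
  -- pointwise bound
  have hptw : ∀ k, max (pp α k - qq α m k) 0 ≤ (k:ℝ) * Vpmf α k / m := by
    intro k
    rcases Nat.eq_zero_or_pos k with h0 | h1
    · subst h0; simp [pp, qq]
    have hVk := Vpmf_pos hα1 hα2 h1
    have hkR : (1:ℝ) ≤ (k:ℝ) := by exact_mod_cast h1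
    have hnn : (0:ℝ) ≤ (k:ℝ) * Vpmf α k / m := by positivity
    have h1' : 1 ≤ k := h1
    rw [max_le_iff]
    refine ⟨?_, hnn⟩
    rw [pp, if_pos h1', qq]
    by_cases h2 : k ≤ m - 1
    · rw [if_pos ⟨h1', h2⟩]
      have := key_bound hα1 hα2 h1 (show k < m by omega)
      calc Vpmf α k - jumpProb α m (m - k) ≤ Vpmf α k * (k:ℝ) / (m:ℝ) := this
        _ = (k:ℝ) * Vpmf α k / m := by ring
    · rw [if_neg (by tauto), sub_zero]
      have hkm : (m:ℝ) ≤ (k:ℝ) := by exact_mod_cast (by omega : m ≤ k)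
      rw [le_div_iff₀ (by linarith : (0:ℝ) < (m:ℝ))]
      nlinarith
  -- partial sums bound
  have hsum : ∀ s : Finset ℕ, ∑ k ∈ s, max (pp α k - qq α m k) 0 ≤ 1 / ((α - 1) * m) := by
    intro s
    obtain ⟨n, hs⟩ := s.exists_nat_subset_range
    have hnn : ∀ k : ℕ, (0:ℝ) ≤ (k:ℝ) * Vpmf α k / m := by
      intro k
      rcases Nat.eq_zero_or_pos k with h0 | h1
      · subst h0; simp
      · have := Vpmf_pos hα1 hα2 h1
        positivity
    calc ∑ k ∈ s, max (pp α k - qq α m k) 0 ≤ ∑ k ∈ s, (k:ℝ) * Vpmf α k / m :=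
          Finset.sum_le_sum fun k _ => hptw k
      _ ≤ ∑ k ∈ range n, (k:ℝ) * Vpmf α k / m :=
          Finset.sum_le_sum_of_subset_of_nonneg hs fun k _ _ => hnn k
      _ = (∑ k ∈ range n, (k:ℝ) * Vpmf α k) / m := by rw [Finset.sum_div]
      _ ≤ (1/(α-1)) / m := by
          gcongr
          exact sum_kV_le hα1 hα2 n
      _ = 1 / ((α - 1) * m) := by rw [div_div]
  have hD : (∑' k, max (pp α k - qq α m k) 0) ≤ 1 / ((α - 1) * m) :=
    tsum_le_of_sum_le' hB hsum
  have hEq : (∑' k : ℕ, if 1 ≤ k then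
        max (Vpmf α k - (if k ≤ m - 1 then jumpProb α m (m - k) else 0)) 0 else 0)
      = ∑' k, max (pp α k - qq α m k) 0 := by
    refine tsum_congr fun k => ?_
    by_cases h1 : 1 ≤ k
    · by_cases h2 : k ≤ m - 1 <;> simp [pp, qq, h1, h2]
    · simp [pp, qq, h1]
  constructor
  · rw [hEq]; exact hD
  -- part (b)
  intro A
  have hsp := summable_pp hα1 hα2
  have hsq : Summable (qq α m) := summable_of_ne_finset_zero (qq_zero (m := m))
  have hsmax : Summable (fun k => max (pp α k - qq α m k) 0) := by
    apply Summable.of_nonneg_of_le (fun k => le_max_right _ _) (fun k => ?_) hsp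
    have := qq_nonneg hα1 hα2 hm k
    have := pp_nonneg hα1 hα2 k
    rw [max_le_iff]
    constructor <;> linarith
  set pA : ℕ → ℝ := fun k => if k ∈ A then pp α k else 0 with hpA
  set qA : ℕ → ℝ := fun k => if k ∈ A then qq α m k else 0 with hqA
  have epA : (∑' k : ℕ, if k ∈ A ∧ 1 ≤ k then Vpmf α k else 0) = ∑' k, pA k := by
    refine tsum_congr fun k => ?_
    by_cases h1 : k ∈ A <;> by_cases h2 : 1 ≤ k <;> simp [pp, pA, h1, h2]
  have eqA : (∑' k : ℕ, if k ∈ A ∧ 1 ≤ k ∧ k ≤ m - 1 then jumpProb α m (m - k) else 0)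
      = ∑' k, qA k := by
    refine tsum_congr fun k => ?_
    by_cases h1 : k ∈ A <;> by_cases h2 : 1 ≤ k <;> by_cases h3 : k ≤ m - 1 <;>
      simp [qq, qA, h1, h2, h3]
  rw [epA, eqA]
  have hspA : Summable pA := by
    apply Summable.of_nonneg_of_le (fun k => ?_) (fun k => ?_) hsp
    · rw [hpA]; dsimp only; split
      · exact pp_nonneg hα1 hα2 k
      · exact le_refl 0
    · rw [hpA]; dsimp only; split
      · exact le_refl _
      · exact pp_nonneg hα1 hα2 k
  have hsqA : Summable qA := by
    apply summable_of_ne_finset_zero (s := Finset.Ico 1 m)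
    intro k hk
    rw [hqA]; dsimp only
    simp [qq_zero k hk]
  have d1 : (∑' k, pA k) - (∑' k, qA k) = ∑' k, (pA k - qA k) := (Summable.tsum_sub hspA hsqA).symm
  have bound1 : (∑' k, (pA k - qA k)) ≤ ∑' k, max (pp α k - qq α m k) 0 := by
    refine Summable.tsum_le_tsum (fun k => ?_) (hspA.sub hsqA) hsmax
    rw [hpA, hqA]; dsimp only
    split
    · exact le_max_left _ _
    · have := le_max_right (pp α k - qq α m k) 0; simp only [sub_zero, sub_self]; linarith
  have hmax2 : ∀ k, max (qq α m k - pp α k) 0 = max (pp α k - qq α m k) 0 + (qq α m k - pp α k) := by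
    intro k
    rcases le_total (pp α k) (qq α m k) with h | h
    · rw [max_eq_left (by linarith), max_eq_right (by linarith)]; ring
    · rw [max_eq_right (by linarith), max_eq_left (by linarith)]; ring
  have hsmax2 : Summable (fun k => max (qq α m k - pp α k) 0) := by
    have : (fun k => max (qq α m k - pp α k) 0)
        = fun k => max (pp α k - qq α m k) 0 + (qq α m k - pp α k) := funext hmax2
    rw [this]
    exact hsmax.add (hsq.sub hsp)
  have tmax2 : (∑' k, max (qq α m k - pp α k) 0) = ∑' k, max (pp α k - qq α m k) 0 := by
    calc (∑' k, max (qq α m k - pp α k) 0)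
        = ∑' k, (max (pp α k - qq α m k) 0 + (qq α m k - pp α k)) := tsum_congr hmax2
      _ = (∑' k, max (pp α k - qq α m k) 0) + ∑' k, (qq α m k - pp α k) :=
          Summable.tsum_add hsmax (hsq.sub hsp)
      _ = (∑' k, max (pp α k - qq α m k) 0) + ((∑' k, qq α m k) - ∑' k, pp α k) := by
          rw [Summable.tsum_sub hsq hsp]
      _ = ∑' k, max (pp α k - qq α m k) 0 := by
          rw [tsum_qq hα1 hα2 hm, tsum_pp hα1 hα2]; ring
  have d2 : (∑' k, qA k) - (∑' k, pA k) = ∑' k, (qA k - pA k) := (Summable.tsum_sub hsqA hspA).symm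
  have bound2 : (∑' k, (qA k - pA k)) ≤ ∑' k, max (qq α m k - pp α k) 0 := by
    refine Summable.tsum_le_tsum (fun k => ?_) (hsqA.sub hspA) hsmax2
    rw [hpA, hqA]; dsimp only
    split
    · exact le_max_left _ _
    · have := le_max_right (qq α m k - pp α k) 0; simp only [sub_zero, sub_self]; linarith
  rw [abs_le]
  constructor
  · have := d2 ▸ bound2
    rw [tmax2] at this
    linarith
  · have := d1 ▸ bound1
    linarith


end PDB

/-- For every integer `m ≥ 2`,
`∑_{k=1}^∞ (P(V = k) - P_{m,m-k})⁺ ≤ 1/((α-1)m)` (with `P_{m,m-k} = 0` for `k ≥ m`);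
in particular, the total variation distance between the law of `V` and the first-jump
law of the chain from `m` is at most `1/((α-1)m)`. -/
theorem pmf_difference_bound (α : ℝ) (hα1 : 1 < α) (hα2 : α < 2) (m : ℕ) (hm : 2 ≤ m) :
    (∑' k : ℕ, if 1 ≤ k then
        max (Vpmf α k - (if k ≤ m - 1 then jumpProb α m (m - k) else 0)) 0 else 0)
      ≤ 1 / ((α - 1) * m) ∧
    ∀ A : Set ℕ,
      |(∑' k : ℕ, if k ∈ A ∧ 1 ≤ k then Vpmf α k else 0)
        - (∑' k : ℕ, if k ∈ A ∧ 1 ≤ k ∧ k ≤ m - 1 then jumpProb α m (m - k) else 0)|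
      ≤ 1 / ((α - 1) * m) := by
  exact PDB.main α hα1 hα2 m hm

end
end

section
/- For the block-counting jump chain (X_i) started from n and any integers 2 ≤ a < b < n, the probability that no X_i lies in the interval [a,b] is at most ∑_{k=1}^{∞} P(V > b − a + k). Consequently, for every ε > 0 there is an integer r such that for all n and all intervals [a,b] ⊆ [2, n−1] with b − a ≥ r, the probability that the chain started from n visits no point of [a,b] is at most ε. -/
open MeasureTheory
open scoped ENNReal Classical

noncomputable section
set_option linter.unusedSectionVars false

/-- The block-counting jump chain of the Beta(2-α,α)-coalescent started from `n`:
`X 0 = n` a.s., the chain is strictly decreasing until absorption at `1` (where it stays),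
and given the whole past it jumps from `m > 1` to `l` with probability `P_{m,l}`. -/
structure IsJumpChain (α : ℝ) {Ω : Type*} [MeasurableSpace Ω] (μ : Measure Ω)
    (n : ℕ) (X : ℕ → Ω → ℕ) : Prop where
  meas : ∀ i, Measurable (X i)
  init : ∀ᵐ ω ∂μ, X 0 ω = n
  pos : ∀ᵐ ω ∂μ, ∀ i, 1 ≤ X i ω
  step : ∀ᵐ ω ∂μ, ∀ i, (1 < X i ω → X (i + 1) ω < X i ω) ∧ (X i ω = 1 → X (i + 1) ω = 1)
  markov : ∀ (i : ℕ) (f : ℕ → ℕ), 1 < f i → ∀ l : ℕ,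
    μ {ω | (∀ j ≤ i, X j ω = f j) ∧ X (i + 1) ω = l}
      = ENNReal.ofReal (jumpProb α (f i) l) * μ {ω | ∀ j ≤ i, X j ω = f j}

/-- The strict tail `P(V > k)` of `V`. -/
def Vgt (α : ℝ) (k : ℕ) : ℝ := Vge α (k + 1)

/-! ### auxiliary analytic development -/

namespace Avoid

variable (α : ℝ)

/-- `g j = Γ(j+1-α)/Γ(j+1)`. -/
def gf (j : ℕ) : ℝ := Real.Gamma ((j : ℝ) + 1 - α) / Real.Gamma ((j : ℝ) + 1)

/-- `u i = Γ(i+1-α)/Γ(i+2)`. -/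
def uf (i : ℕ) : ℝ := Real.Gamma ((i : ℝ) + 1 - α) / Real.Gamma ((i : ℝ) + 2)

variable {α} (hα1 : 1 < α) (hα2 : α < 2)

section basic
include hα1 hα2

omit hα1 in
lemma arg_pos {j : ℕ} (hj : 1 ≤ j) : 0 < (j : ℝ) + 1 - α := by
  have : (1 : ℝ) ≤ (j : ℝ) := by exact_mod_cast hj
  linarith

lemma gf_pos {j : ℕ} (hj : 1 ≤ j) : 0 < gf α j := by
  apply div_pos (Real.Gamma_pos_of_pos (arg_pos hα2 hj))
  apply Real.Gamma_pos_of_pos; positivity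

lemma uf_pos {i : ℕ} (hi : 1 ≤ i) : 0 < uf α i := by
  apply div_pos (Real.Gamma_pos_of_pos (arg_pos hα2 hi))
  apply Real.Gamma_pos_of_pos; positivity

lemma gf_rec {i : ℕ} (hi : 1 ≤ i) :
    ((i : ℝ) + 1) * gf α (i + 1) = ((i : ℝ) + 1 - α) * gf α i := by
  have h1 : ((i : ℝ) + 1 - α) ≠ 0 := ne_of_gt (arg_pos hα2 hi)
  have h2 : ((i : ℝ) + 1) ≠ 0 := by positivity
  have e1 : Real.Gamma (((i : ℕ) + 1 : ℕ) + 1 - α) = ((i : ℝ) + 1 - α) * Real.Gamma ((i : ℝ) + 1 - α) := by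
    push_cast
    rw [show (i : ℝ) + 1 + 1 - α = ((i : ℝ) + 1 - α) + 1 by ring, Real.Gamma_add_one h1]
  have e2 : Real.Gamma (((i : ℕ) + 1 : ℕ) + 1) = ((i : ℝ) + 1) * Real.Gamma ((i : ℝ) + 1) := by
    push_cast
    rw [show (i : ℝ) + 1 + 1 = ((i : ℝ) + 1) + 1 by ring, Real.Gamma_add_one h2]
  have hΓ2 : Real.Gamma ((i : ℝ) + 1) ≠ 0 := ne_of_gt (Real.Gamma_pos_of_pos (by positivity))
  unfold gf
  rw [e1, e2]
  field_simp

lemma gf_diff {i : ℕ} (hi : 1 ≤ i) : gf α i - gf α (i + 1) = α * uf α i := by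
  have h2 : ((i : ℝ) + 1) ≠ 0 := by positivity
  have hΓ1 : Real.Gamma ((i : ℝ) + 1) ≠ 0 := ne_of_gt (Real.Gamma_pos_of_pos (by positivity))
  have hrec := gf_rec hα1 hα2 hi
  have e2 : Real.Gamma ((i : ℝ) + 2) = ((i : ℝ) + 1) * Real.Gamma ((i : ℝ) + 1) := by
    rw [show (i : ℝ) + 2 = ((i : ℝ) + 1) + 1 by ring, Real.Gamma_add_one h2]
  have hu : uf α i = gf α i / ((i : ℝ) + 1) := by
    unfold uf gf; rw [e2]; field_simp
  have hg1 : gf α (i + 1) = ((i : ℝ) + 1 - α) * gf α i / ((i : ℝ) + 1) := by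
    rw [eq_div_iff h2]
    linarith [hrec]
  rw [hu, hg1]
  field_simp
  ring

lemma gf_mono {i : ℕ} (hi : 1 ≤ i) : gf α (i + 1) ≤ gf α i := by
  have := gf_diff hα1 hα2 hi
  nlinarith [uf_pos hα1 hα2 hi]

lemma gf_mono_le {i j : ℕ} (hi : 1 ≤ i) (hij : i ≤ j) : gf α j ≤ gf α i := by
  induction j, hij using Nat.le_induction with
  | base => exact le_refl _
  | succ k hk ih => exact le_trans (gf_mono hα1 hα2 (le_trans hi hk)) ih

/-- telescoping sum: `∑_{i=p}^{q-1} u i = (g p - g q)/α`. -/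
lemma uf_sum {p q : ℕ} (hp : 1 ≤ p) (hpq : p ≤ q) :
    ∑ i ∈ Finset.Ico p q, uf α i = (gf α p - gf α q) / α := by
  have hα0 : α ≠ 0 := by linarith
  induction q, hpq using Nat.le_induction with
  | base => simp
  | succ k hk ih =>
      have hd := gf_diff hα1 hα2 (le_trans hp hk)
      rw [Finset.sum_Ico_succ_top hk, ih]
      have : uf α k = (gf α k - gf α (k+1))/α := by rw [hd]; field_simp
      rw [this]; ring

/-- `H k := (k+1) g(k+1)` is antitone and nonneg. -/
def Hf (α : ℝ) (k : ℕ) : ℝ := ((k : ℝ) + 1) * gf α (k + 1)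

lemma Hf_antitone : Antitone (Hf α) := by
  apply antitone_nat_of_succ_le
  intro k
  have hrec := gf_rec hα1 hα2 (Nat.succ_le_succ (Nat.zero_le k))
  unfold Hf
  push_cast
  push_cast at hrec
  rw [hrec]
  have hg := gf_pos hα1 hα2 (Nat.succ_le_succ (Nat.zero_le k))
  nlinarith [hg]

lemma Hf_nonneg (k : ℕ) : 0 ≤ Hf α k := by
  have := gf_pos hα1 hα2 (Nat.succ_le_succ (Nat.zero_le k))
  unfold Hf; positivity

omit hα1 hα2 in
lemma Hf_eq (k : ℕ) : Hf α k = ((k:ℝ) + 1) * gf α (k+1) := rfl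

/-- limit of `Hf`. -/
def Lf (α : ℝ) : ℝ := ⨅ k, Hf α k

lemma Hf_tendsto : Filter.Tendsto (Hf α) Filter.atTop (nhds (Lf α)) :=
  tendsto_atTop_ciInf (Hf_antitone hα1 hα2)
    ⟨0, by rintro x ⟨k, rfl⟩; exact Hf_nonneg hα1 hα2 k⟩

/-- `g` tends to zero. -/
lemma gf_tendsto_zero : Filter.Tendsto (gf α) Filter.atTop (nhds 0) := by
  have hb : ∀ j : ℕ, 1 ≤ j → gf α j ≤ Hf α 0 / j := by
    intro j hj
    have hH : Hf α (j-1) ≤ Hf α 0 := Hf_antitone hα1 hα2 (Nat.zero_le _)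
    have hje : (j-1) + 1 = j := Nat.succ_pred_eq_of_pos hj
    have hcast : ((j-1:ℕ):ℝ) + 1 = (j:ℝ) := by
      rw [Nat.cast_sub hj]; push_cast; ring
    have heq : Hf α (j-1) = (j:ℝ) * gf α j := by
      rw [Hf_eq, hcast, hje]
    rw [heq] at hH
    have hj0 : (0:ℝ) < (j:ℝ) := by exact_mod_cast hj
    rw [le_div_iff₀ hj0]
    linarith [hH]
  have h0 : ∀ j : ℕ, 1 ≤ j → 0 ≤ gf α j := fun j hj => le_of_lt (gf_pos hα1 hα2 hj)
  apply squeeze_zero' (Filter.eventually_atTop.2 ⟨1, h0⟩) (Filter.eventually_atTop.2 ⟨1, hb⟩)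
  have := Filter.Tendsto.const_div_atTop (tendsto_natCast_atTop_atTop (R := ℝ)) (Hf α 0)
  simpa using this

omit hα1 in
lemma G2_pos : 0 < Real.Gamma (2 - α) := Real.Gamma_pos_of_pos (by linarith)

omit hα1 in
lemma gf_one : gf α 1 = Real.Gamma (2 - α) := by
  unfold gf
  rw [show ((1:ℕ):ℝ) + 1 - α = 2 - α by push_cast; ring,
    show ((1:ℕ):ℝ) + 1 = 2 by norm_num, Real.Gamma_two, div_one]

lemma Vpmf_eq {i : ℕ} (hi : 1 ≤ i) :
    Vpmf α i = (gf α i - gf α (i + 1)) / Real.Gamma (2 - α) := by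
  rw [gf_diff hα1 hα2 hi]
  unfold Vpmf uf
  ring

lemma Vpmf_nonneg {i : ℕ} (hi : 1 ≤ i) : 0 ≤ Vpmf α i := by
  rw [Vpmf_eq hα1 hα2 hi]
  have h1 := gf_mono hα1 hα2 hi
  have h2 := G2_pos (α := α) hα2
  exact div_nonneg (by linarith) (le_of_lt h2)

omit hα1 hα2 in
/-- generic telescoping over `Ico`. -/
lemma telescope (F : ℕ → ℝ) {p q : ℕ} (hpq : p ≤ q) :
    ∑ i ∈ Finset.Ico p q, (F i - F (i + 1)) = F p - F q := by
  induction q, hpq using Nat.le_induction with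
  | base => simp
  | succ k hk ih => rw [Finset.sum_Ico_succ_top hk, ih]; ring

lemma Vge_hasSum {j : ℕ} (hj : 1 ≤ j) :
    HasSum (fun i : ℕ => if j ≤ i ∧ 1 ≤ i then Vpmf α i else 0)
      (gf α j / Real.Gamma (2 - α)) := by
  rw [hasSum_iff_tendsto_nat_of_nonneg]
  · have key : ∀ N, j ≤ N →
        ∑ i ∈ Finset.range N, (if j ≤ i ∧ 1 ≤ i then Vpmf α i else 0)
          = (gf α j - gf α N) / Real.Gamma (2 - α) := by
      intro N hN
      have hfil : (Finset.range N).filter (fun i => j ≤ i ∧ 1 ≤ i) = Finset.Ico j N := by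
        ext x
        simp only [Finset.mem_filter, Finset.mem_range, Finset.mem_Ico]
        omega
      rw [← Finset.sum_filter, hfil]
      have : ∀ i ∈ Finset.Ico j N, Vpmf α i
          = (gf α i - gf α (i + 1)) / Real.Gamma (2 - α) := by
        intro i hi
        simp only [Finset.mem_Ico] at hi
        exact Vpmf_eq hα1 hα2 (le_trans hj hi.1)
      rw [Finset.sum_congr rfl this, ← Finset.sum_div, telescope (gf α) hN]
    have hlim : Filter.Tendsto (fun N => (gf α j - gf α N) / Real.Gamma (2 - α))
        Filter.atTop (nhds (gf α j / Real.Gamma (2 - α))) := by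
      have := ((gf_tendsto_zero hα1 hα2).const_sub (gf α j)).div_const (Real.Gamma (2 - α))
      simpa using this
    apply hlim.congr'
    filter_upwards [Filter.eventually_atTop.2 ⟨j, fun N hN => (key N hN)⟩] with N h
    exact h.symm
  · intro i
    split
    · next h => exact Vpmf_nonneg hα1 hα2 h.2
    · exact le_refl 0

lemma Vge_eq {j : ℕ} (hj : 1 ≤ j) : Vge α j = gf α j / Real.Gamma (2 - α) :=
  (Vge_hasSum hα1 hα2 hj).tsum_eq

lemma Vgt_eq (k : ℕ) : Vgt α k = gf α (k + 1) / Real.Gamma (2 - α) := by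
  rw [Vgt, Vge_eq hα1 hα2 (Nat.succ_le_succ (Nat.zero_le k))]

lemma Vgt_nonneg (k : ℕ) : 0 ≤ Vgt α k := by
  rw [Vgt_eq hα1 hα2]
  exact le_of_lt (div_pos (gf_pos hα1 hα2 (Nat.succ_le_succ (Nat.zero_le k))) (G2_pos hα2))

lemma Hf_diff (i : ℕ) : Hf α i - Hf α (i + 1) = (α - 1) * gf α (i + 1) := by
  have hrec := gf_rec hα1 hα2 (Nat.succ_le_succ (Nat.zero_le i))
  unfold Hf
  push_cast
  push_cast at hrec
  rw [hrec]
  ring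

lemma Lf_le (k : ℕ) : Lf α ≤ Hf α k :=
  ciInf_le ⟨0, by rintro x ⟨k, rfl⟩; exact Hf_nonneg hα1 hα2 k⟩ k

/-- the tail sums of `Vgt`. -/
lemma tail_hasSum (d : ℕ) :
    HasSum (fun k : ℕ => Vgt α (d + (k + 1)))
      ((Hf α (d + 1) - Lf α) / ((α - 1) * Real.Gamma (2 - α))) := by
  rw [hasSum_iff_tendsto_nat_of_nonneg (fun k => Vgt_nonneg hα1 hα2 _)]
  have key : ∀ N, ∑ k ∈ Finset.range N, Vgt α (d + (k + 1))
      = (Hf α (d + 1) - Hf α (d + N + 1)) / ((α - 1) * Real.Gamma (2 - α)) := by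
    intro N
    induction N with
    | zero => simp
    | succ M ih =>
        have e1 : d + (M + 1) + 1 = (d + M + 1) + 1 := by omega
        rw [Finset.sum_range_succ, ih, Vgt_eq hα1 hα2, e1]
        have hd := Hf_diff hα1 hα2 (d + M + 1)
        have hα1' : (0:ℝ) < α - 1 := by linarith
        have hG := G2_pos (α := α) hα2
        have hgf : gf α ((d + M + 1) + 1)
            = (Hf α (d + M + 1) - Hf α ((d + M + 1) + 1)) / (α - 1) := by
          field_simp
          linarith [hd]
        rw [hgf]
        field_simp
        ring
  have hlim : Filter.Tendsto (fun N : ℕ => Hf α (d + N + 1)) Filter.atTop (nhds (Lf α)) := by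
    have h1 : Filter.Tendsto (fun N : ℕ => N + (d + 1)) Filter.atTop Filter.atTop :=
      Filter.tendsto_add_atTop_nat (d + 1)
    have := (Hf_tendsto hα1 hα2).comp h1
    apply this.congr
    intro N
    simp only [Function.comp_apply]
    congr 1
    omega
  have := ((Filter.Tendsto.const_sub (Hf α (d + 1)) hlim).div_const ((α - 1) * Real.Gamma (2 - α)))
  apply this.congr
  intro N
  exact (key N).symm

lemma tail_tsum_eq (d : ℕ) :
    ∑' k : ℕ, Vgt α (d + (k + 1))
      = (Hf α (d + 1) - Lf α) / ((α - 1) * Real.Gamma (2 - α)) :=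
  (tail_hasSum hα1 hα2 d).tsum_eq

lemma tail_summable (d : ℕ) : Summable (fun k : ℕ => Vgt α (d + (k + 1))) :=
  (tail_hasSum hα1 hα2 d).summable

/-! ### the jump-size tail bound -/

/-- unnormalized merger weight `a_k = C(m,k) B(k-α, m-k+α)`. -/
def af (α : ℝ) (m k : ℕ) : ℝ := (m.choose k : ℝ) * betaR ((k : ℝ) - α) ((m : ℝ) - (k : ℝ) + α)

/-- `R_k = m!/(m-k)! · Γ(m-k+α)/Γ(m)`. -/
def Rf (α : ℝ) (m k : ℕ) : ℝ :=
  (m.descFactorial k : ℝ) * Real.Gamma ((m : ℝ) - (k : ℝ) + α) / Real.Gamma m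

omit hα2 in
lemma Rf_pos {m k : ℕ} (hm : 1 ≤ m) (hkm : k ≤ m) : 0 < Rf α m k := by
  have h1 : 0 < (m.descFactorial k : ℝ) := by
    have : 0 < m.descFactorial k := by
      rw [Nat.descFactorial_eq_factorial_mul_choose]
      exact Nat.mul_pos (Nat.factorial_pos k) (Nat.choose_pos hkm)
    exact_mod_cast this
  have h2 : 0 < Real.Gamma ((m : ℝ) - (k : ℝ) + α) := by
    apply Real.Gamma_pos_of_pos
    have : (k : ℝ) ≤ (m : ℝ) := by exact_mod_cast hkm
    linarith
  have h3 : 0 < Real.Gamma (m : ℝ) := by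
    apply Real.Gamma_pos_of_pos
    exact_mod_cast hm
  exact div_pos (mul_pos h1 h2) h3

omit hα2 in
lemma af_eq {m k : ℕ} (hk2 : 2 ≤ k) (hkm : k ≤ m) :
    af α m k = Rf α m k * uf α (k - 1) := by
  have hk1 : 1 ≤ k := le_trans (by norm_num) hk2
  have hcast : ((k - 1 : ℕ) : ℝ) = (k : ℝ) - 1 := by
    rw [Nat.cast_sub hk1]; norm_num
  have hu : uf α (k - 1) = Real.Gamma ((k : ℝ) - α) / Real.Gamma ((k : ℝ) + 1) := by
    unfold uf
    rw [hcast]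
    ring_nf
  have hb : betaR ((k : ℝ) - α) ((m : ℝ) - (k : ℝ) + α)
      = Real.Gamma ((k : ℝ) - α) * Real.Gamma ((m : ℝ) - (k : ℝ) + α) / Real.Gamma (m : ℝ) := by
    unfold betaR
    rw [show (k : ℝ) - α + ((m : ℝ) - (k : ℝ) + α) = (m : ℝ) by ring]
  have hdf : (m.descFactorial k : ℝ) = (k.factorial : ℝ) * (m.choose k : ℝ) := by
    exact_mod_cast congrArg (Nat.cast (R := ℝ)) (Nat.descFactorial_eq_factorial_mul_choose m k)
  have hfac : Real.Gamma ((k : ℝ) + 1) = (k.factorial : ℝ) := Real.Gamma_nat_eq_factorial k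
  have hfacpos : (0:ℝ) < (k.factorial : ℝ) := by exact_mod_cast Nat.factorial_pos k
  unfold af Rf
  rw [hb, hu, hdf, hfac]
  field_simp

include hα2 in
lemma af_pos {m k : ℕ} (hk2 : 2 ≤ k) (hkm : k ≤ m) : 0 < af α m k := by
  rw [af_eq hα1 hk2 hkm]
  have hm1 : 1 ≤ m := le_trans (le_trans (by norm_num) hk2) hkm
  exact mul_pos (Rf_pos hα1 hm1 hkm) (uf_pos hα1 hα2 (by omega))

omit hα2 in
lemma Rf_succ_le {m k : ℕ} (hk1 : 1 ≤ k) (hkm : k + 1 ≤ m) :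
    Rf α m (k + 1) ≤ Rf α m k := by
  have hm1 : (1:ℕ) ≤ m := by omega
  have hx : (0:ℝ) < (m : ℝ) - (k : ℝ) - 1 + α := by
    have : ((k:ℕ) + 1 : ℝ) ≤ (m : ℝ) := by exact_mod_cast hkm
    push_cast at this
    linarith
  have hGm : 0 < Real.Gamma (m : ℝ) := Real.Gamma_pos_of_pos (by exact_mod_cast hm1)
  have hdf : (m.descFactorial (k+1) : ℝ) = ((m - k : ℕ) : ℝ) * (m.descFactorial k : ℝ) := by
    exact_mod_cast congrArg (Nat.cast (R := ℝ)) (Nat.descFactorial_succ m k)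
  have hmk : ((m - k : ℕ) : ℝ) = (m : ℝ) - (k : ℝ) := by
    rw [Nat.cast_sub (by omega)]
  have hGrec : Real.Gamma ((m : ℝ) - ((k:ℝ) + 1) + α)
      * ((m : ℝ) - (k : ℝ) - 1 + α) = Real.Gamma ((m : ℝ) - (k : ℝ) + α) := by
    rw [show (m : ℝ) - (k : ℝ) + α = ((m : ℝ) - (k : ℝ) - 1 + α) + 1 by ring,
      Real.Gamma_add_one (ne_of_gt hx)]
    rw [show (m : ℝ) - ((k:ℝ) + 1) + α = (m : ℝ) - (k : ℝ) - 1 + α by ring]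
    ring
  unfold Rf
  rw [div_le_div_iff_of_pos_right hGm]
  push_cast [hdf, hmk]
  rw [← hGrec]
  have hΓx : 0 < Real.Gamma ((m : ℝ) - ((k:ℝ) + 1) + α) := by
    apply Real.Gamma_pos_of_pos
    rw [show (m : ℝ) - ((k:ℝ) + 1) + α = (m : ℝ) - (k : ℝ) - 1 + α by ring]
    exact hx
  have hdfpos : (0:ℝ) < (m.descFactorial k : ℝ) := by
    have : 0 < m.descFactorial k := by
      rw [Nat.descFactorial_eq_factorial_mul_choose]
      exact Nat.mul_pos (Nat.factorial_pos k) (Nat.choose_pos (by omega))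
    exact_mod_cast this
  have hle : (m : ℝ) - (k : ℝ) ≤ (m : ℝ) - (k : ℝ) - 1 + α := by linarith
  have hnn : (0:ℝ) ≤ (m : ℝ) - (k : ℝ) := by
    have : ((k:ℕ) : ℝ) ≤ (m : ℝ) := by exact_mod_cast (by omega : k ≤ m)
    linarith
  nlinarith [mul_le_mul_of_nonneg_left hle (mul_pos hdfpos hΓx).le]

omit hα2 in
lemma Rf_le {m k k' : ℕ} (hk2 : 2 ≤ k) (hkk : k ≤ k') (hk'm : k' ≤ m) :
    Rf α m k' ≤ Rf α m k := by
  induction k', hkk using Nat.le_induction with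
  | base => exact le_refl _
  | succ j hj ih =>
      exact le_trans (Rf_succ_le hα1 (by omega) hk'm) (ih (by omega))

omit hα1 hα2 in
/-- reindexing `l ↦ M - l + 1`. -/
lemma sum_reindex (F : ℕ → ℝ) (M p q : ℕ) (hp : 1 ≤ p) (hq : q ≤ M) :
    ∑ l ∈ Finset.Ico p q, F (M - l + 1) = ∑ k ∈ Finset.Ico (M - q + 2) (M - p + 2), F k := by
  exact Finset.sum_nbij' (fun l => M - l + 1) (fun k => M - k + 1)
    (fun l hl => by simp only [Finset.mem_Ico] at hl ⊢; omega)
    (fun k hk => by simp only [Finset.mem_Ico] at hk ⊢; omega)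
    (fun l hl => by
      simp only [Finset.mem_Ico] at hl
      show M - (M - l + 1) + 1 = l
      omega)
    (fun k hk => by
      simp only [Finset.mem_Ico] at hk
      show M - (M - k + 1) + 1 = k
      omega)
    (fun l hl => rfl)

omit hα1 hα2 in
lemma rateML_eq (m l : ℕ) :
    rateML α m l = (1 / (Real.Gamma (2 - α) * Real.Gamma α)) * af α m (m - l + 1) := by
  unfold rateML collRate af
  ring

omit hα1 hα2 in
lemma totalRate_eq (m : ℕ) (hm : 1 ≤ m) :
    totalRate α m = (1 / (Real.Gamma (2 - α) * Real.Gamma α))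
      * ∑ k ∈ Finset.Ico 2 (m + 1), af α m k := by
  unfold totalRate
  calc ∑ l ∈ Finset.Ico 1 m, rateML α m l
      = ∑ l ∈ Finset.Ico 1 m, (fun k => (1 / (Real.Gamma (2 - α) * Real.Gamma α)) * af α m k) (m - l + 1) := by
        apply Finset.sum_congr rfl
        intro l _
        exact rateML_eq m l
    _ = ∑ k ∈ Finset.Ico (m - m + 2) (m - 1 + 2),
          (1 / (Real.Gamma (2 - α) * Real.Gamma α)) * af α m k :=
        sum_reindex (fun k => (1 / (Real.Gamma (2 - α) * Real.Gamma α)) * af α m k)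
          m 1 m (le_refl 1) (le_refl m)
    _ = (1 / (Real.Gamma (2 - α) * Real.Gamma α)) * ∑ k ∈ Finset.Ico 2 (m + 1), af α m k := by
        rw [show m - m + 2 = 2 by omega, show m - 1 + 2 = m + 1 by omega, Finset.mul_sum]

omit hα1 hα2 in
/-- index shift. -/
lemma sum_shift (F : ℕ → ℝ) (p q : ℕ) (hp : 1 ≤ p) :
    ∑ k ∈ Finset.Ico p q, F (k - 1) = ∑ i ∈ Finset.Ico (p - 1) (q - 1), F i := by
  exact Finset.sum_nbij' (fun k => k - 1) (fun i => i + 1)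
    (fun k hk => by simp only [Finset.mem_Ico] at hk ⊢; omega)
    (fun i hi => by simp only [Finset.mem_Ico] at hi ⊢; omega)
    (fun k hk => by
      simp only [Finset.mem_Ico] at hk
      show k - 1 + 1 = k
      omega)
    (fun i hi => by
      simp only [Finset.mem_Ico] at hi
      show i + 1 - 1 = i
      omega)
    (fun k hk => rfl)

include hα2 in
lemma cf_pos : 0 < 1 / (Real.Gamma (2 - α) * Real.Gamma α) := by
  have h1 := G2_pos (α := α) hα2
  have h2 : 0 < Real.Gamma α := Real.Gamma_pos_of_pos (by linarith)
  positivity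

omit hα1 hα2 in
lemma af_top_zero (m : ℕ) : af α m (m + 1) = 0 := by
  unfold af
  rw [Nat.choose_eq_zero_of_lt (Nat.lt_succ_self m)]
  norm_num

lemma rateML_nonneg {m l : ℕ} (hm : 2 ≤ m) (hl : l < m) : 0 ≤ rateML α m l := by
  rw [rateML_eq]
  rcases Nat.eq_zero_or_pos l with h0 | h1
  · subst h0
    rw [show m - 0 + 1 = m + 1 by omega, af_top_zero]
    ring_nf
    exact le_refl 0
  · have h2 : 2 ≤ m - l + 1 := by omega
    have h3 : m - l + 1 ≤ m := by omega
    exact le_of_lt (mul_pos (cf_pos hα1 hα2) (af_pos hα1 hα2 h2 h3))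

lemma totalRate_pos {m : ℕ} (hm : 2 ≤ m) : 0 < totalRate α m := by
  rw [totalRate_eq m (by omega)]
  apply mul_pos (cf_pos hα1 hα2)
  apply Finset.sum_pos
  · intro k hk
    simp only [Finset.mem_Ico] at hk
    exact af_pos hα1 hα2 hk.1 (by omega)
  · exact ⟨2, by simp only [Finset.mem_Ico]; omega⟩

lemma jumpProb_nonneg {m l : ℕ} (hm : 2 ≤ m) (hl : l < m) : 0 ≤ jumpProb α m l :=
  div_nonneg (rateML_nonneg hα1 hα2 hm hl) (le_of_lt (totalRate_pos hα1 hα2 hm))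

/-- KEY: the probability of jumping from `m` below `a` is at most `P(V ≥ m-a+1)`. -/
lemma jump_tail_le {m a : ℕ} (ha2 : 2 ≤ a) (ham : a < m) :
    ∑ l ∈ Finset.range a, jumpProb α m l ≤ Vge α (m - a + 1) := by
  set j := m - a + 1 with hjdef
  have hj2 : 2 ≤ j := by omega
  have hj1 : 1 ≤ j := by omega
  have hjm : j + 1 ≤ m := by omega
  have hm2 : 2 ≤ m := by omega
  have hG := G2_pos (α := α) hα2
  have hα0 : (0:ℝ) < α := by linarith
  set c := 1 / (Real.Gamma (2 - α) * Real.Gamma α) with hcdef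
  have hc : 0 < c := cf_pos hα1 hα2
  set R := Rf α m (j + 1) with hRdef
  have hR : 0 < R := Rf_pos hα1 (by omega) hjm
  set A := ∑ k ∈ Finset.Ico 2 (j + 1), af α m k with hAdef
  set B := ∑ k ∈ Finset.Ico (j + 1) (m + 1), af α m k with hBdef
  set S := ∑ k ∈ Finset.Ico 2 (m + 1), af α m k with hSdef
  have hS_split : S = A + B := by
    rw [hAdef, hBdef, hSdef, Finset.sum_Ico_consecutive]
    · omega
    · omega
  -- sum of uf over shifted index
  have hsumB : ∑ k ∈ Finset.Ico (j + 1) (m + 1), uf α (k - 1)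
      = (gf α j - gf α m) / α := by
    rw [sum_shift (uf α) (j + 1) (m + 1) (by omega),
      show j + 1 - 1 = j by omega, show m + 1 - 1 = m by omega]
    exact uf_sum hα1 hα2 hj1 (by omega)
  have hsumA : ∑ k ∈ Finset.Ico 2 (j + 1), uf α (k - 1)
      = (gf α 1 - gf α j) / α := by
    rw [sum_shift (uf α) 2 (j + 1) (by omega),
      show 2 - 1 = 1 by omega, show j + 1 - 1 = j by omega]
    exact uf_sum hα1 hα2 (le_refl 1) hj1
  have hBb : B ≤ R * ((gf α j - gf α m) / α) := by
    rw [← hsumB, hBdef, Finset.mul_sum]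
    apply Finset.sum_le_sum
    intro k hk
    simp only [Finset.mem_Ico] at hk
    rw [af_eq hα1 (by omega) (by omega)]
    exact mul_le_mul_of_nonneg_right (Rf_le hα1 (by omega) (by omega) (by omega))
      (le_of_lt (uf_pos hα1 hα2 (by omega)))
  have hAb : R * ((gf α 1 - gf α j) / α) ≤ A := by
    rw [← hsumA, hAdef, Finset.mul_sum]
    apply Finset.sum_le_sum
    intro k hk
    simp only [Finset.mem_Ico] at hk
    rw [af_eq hα1 (by omega) (by omega)]
    exact mul_le_mul_of_nonneg_right (Rf_le hα1 (by omega) (by omega) (by omega))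
      (le_of_lt (uf_pos hα1 hα2 (by omega)))
  have hB0 : 0 ≤ B := by
    apply Finset.sum_nonneg
    intro k hk
    simp only [Finset.mem_Ico] at hk
    exact le_of_lt (af_pos hα1 hα2 (by omega) (by omega))
  have hA0 : 0 ≤ A := by
    apply Finset.sum_nonneg
    intro k hk
    simp only [Finset.mem_Ico] at hk
    exact le_of_lt (af_pos hα1 hα2 (by omega) (by omega))
  have hS0 : 0 < S := by
    apply Finset.sum_pos
    · intro k hk
      simp only [Finset.mem_Ico] at hk
      exact af_pos hα1 hα2 hk.1 (by omega)
    · exact ⟨2, by simp only [Finset.mem_Ico]; omega⟩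
  have hnum : ∑ l ∈ Finset.range a, rateML α m l = c * B := by
    have hsplit : Finset.range a = insert 0 (Finset.Ico 1 a) := by
      ext x; simp only [Finset.mem_insert, Finset.mem_range, Finset.mem_Ico]; omega
    rw [hsplit, Finset.sum_insert (by simp only [Finset.mem_Ico]; omega)]
    have h0 : rateML α m 0 = 0 := by
      rw [rateML_eq, show m - 0 + 1 = m + 1 by omega, af_top_zero]
      ring
    rw [h0, zero_add]
    calc ∑ l ∈ Finset.Ico 1 a, rateML α m l
        = ∑ l ∈ Finset.Ico 1 a, (fun k => c * af α m k) (m - l + 1) := by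
          apply Finset.sum_congr rfl
          intro l _
          exact rateML_eq m l
      _ = ∑ k ∈ Finset.Ico (m - a + 2) (m - 1 + 2), c * af α m k :=
          sum_reindex (fun k => c * af α m k) m 1 a (le_refl 1) (by omega)
      _ = c * B := by
          rw [show m - a + 2 = j + 1 by omega, show m - 1 + 2 = m + 1 by omega,
            hBdef, Finset.mul_sum]
  have hTR : totalRate α m = c * S := totalRate_eq m (by omega)
  rw [Vge_eq hα1 hα2 hj1]
  unfold jumpProb
  rw [← Finset.sum_div, hnum, hTR, mul_div_mul_left _ _ (ne_of_gt hc),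
    div_le_div_iff₀ hS0 hG, ← gf_one (α := α) hα2, hS_split]
  have hg1j : 0 ≤ gf α 1 - gf α j := sub_nonneg.2 (gf_mono_le hα1 hα2 (le_refl 1) hj1)
  have hgj0 : 0 ≤ gf α j := le_of_lt (gf_pos hα1 hα2 hj1)
  have hgm0 : 0 ≤ gf α m := le_of_lt (gf_pos hα1 hα2 (by omega))
  have h1 : B * (gf α 1 - gf α j) ≤ (R * ((gf α j - gf α m) / α)) * (gf α 1 - gf α j) :=
    mul_le_mul_of_nonneg_right hBb hg1j
  have h2 : (R * ((gf α j - gf α m) / α)) * (gf α 1 - gf α j)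
      ≤ (R * ((gf α 1 - gf α j) / α)) * gf α j := by
    have e1 : (R * ((gf α j - gf α m) / α)) * (gf α 1 - gf α j)
        = (R / α) * ((gf α j - gf α m) * (gf α 1 - gf α j)) := by ring
    have e2 : (R * ((gf α 1 - gf α j) / α)) * gf α j
        = (R / α) * ((gf α 1 - gf α j) * gf α j) := by ring
    rw [e1, e2]
    apply mul_le_mul_of_nonneg_left _ (le_of_lt (div_pos hR hα0))
    nlinarith [mul_nonneg hg1j hgm0]
  have h3 : (R * ((gf α 1 - gf α j) / α)) * gf α j ≤ A * gf α j :=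
    mul_le_mul_of_nonneg_right hAb hgj0
  linarith

end basic

/-! ### probabilistic part -/

/-- the almost sure pathwise properties of the chain. -/
def GoodP {Ω : Type} (n : ℕ) (X : ℕ → Ω → ℕ) (ω : Ω) : Prop :=
  X 0 ω = n ∧ (∀ i, 1 ≤ X i ω) ∧
    ∀ i, (1 < X i ω → X (i + 1) ω < X i ω) ∧ (X i ω = 1 → X (i + 1) ω = 1)

section prob

variable {Ω : Type} [MeasurableSpace Ω] {μ : Measure Ω} {n : ℕ} {X : ℕ → Ω → ℕ}

lemma good_ae (hC : IsJumpChain α μ n X) : ∀ᵐ ω ∂μ, GoodP n X ω := by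
  filter_upwards [hC.init, hC.pos, hC.step] with ω h1 h2 h3
  exact ⟨h1, h2, h3⟩

lemma good_null (hC : IsJumpChain α μ n X) : μ {ω | ¬ GoodP n X ω} = 0 := by
  have := good_ae (α := α) hC
  rwa [MeasureTheory.ae_iff] at this

lemma good_step {ω : Ω} (hg : GoodP n X ω) (i : ℕ) : X (i + 1) ω ≤ X i ω := by
  rcases Nat.lt_or_ge 1 (X i ω) with h | h
  · exact le_of_lt ((hg.2.2 i).1 h)
  · have h1 := hg.2.1 i
    have : X i ω = 1 := by omega
    rw [(hg.2.2 i).2 this, this]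

lemma good_mono {ω : Ω} (hg : GoodP n X ω) {i j : ℕ} (hij : i ≤ j) : X j ω ≤ X i ω := by
  induction j, hij using Nat.le_induction with
  | base => exact le_refl _
  | succ k hk ih => exact le_trans (good_step hg k) ih

lemma good_strict {ω : Ω} (hg : GoodP n X ω) {i j : ℕ} (hij : i < j) (h1 : 1 < X i ω) :
    X j ω < X i ω :=
  lt_of_le_of_lt (good_mono hg hij) ((hg.2.2 i).1 h1)

lemma good_absorb {ω : Ω} (hg : GoodP n X ω) : X n ω = 1 := by
  have key : ∀ i, X i ω = 1 ∨ X i ω + i ≤ n := by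
    intro i
    induction i with
    | zero => right; rw [hg.1]; omega
    | succ k ih =>
        rcases ih with h | h
        · left; exact (hg.2.2 k).2 h
        · rcases Nat.lt_or_ge 1 (X k ω) with h1 | h1
          · right
            have := (hg.2.2 k).1 h1
            omega
          · have h2 := hg.2.1 k
            left
            exact (hg.2.2 k).2 (by omega)
  rcases key n with h | h
  · exact h
  · have := hg.2.1 n
    omega

lemma good_cross {ω : Ω} (hg : GoodP n X ω) {a b : ℕ}
    (hav : ∀ i, X i ω ∉ Set.Icc a b) (ha : 2 ≤ a) (hab : a < b) (hbn : b < n) :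
    ∃ i, (b < X i ω ∧ X i ω ≤ n) ∧ X (i + 1) ω < a := by
  have hone : X (n + 1) ω = 1 := (hg.2.2 n).2 (good_absorb hg)
  have hex : ∃ i, X (i + 1) ω < a := ⟨n, by rw [hone]; omega⟩
  refine ⟨Nat.find hex, ⟨?_, ?_⟩, Nat.find_spec hex⟩
  · have haX : a ≤ X (Nat.find hex) ω := by
      rcases Nat.eq_zero_or_pos (Nat.find hex) with h0 | h0
      · rw [h0, hg.1]; omega
      · have hlt : Nat.find hex - 1 < Nat.find hex := by omega
        have := Nat.find_min hex hlt
        rw [show Nat.find hex - 1 + 1 = Nat.find hex by omega] at this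
        omega
    have hnotin := hav (Nat.find hex)
    simp only [Set.mem_Icc, not_and, not_le] at hnotin
    exact hnotin haX
  · rw [← hg.1]
    exact good_mono hg (Nat.zero_le _)

omit hα1 hα2 in
lemma path_measurable (hX : ∀ i, Measurable (X i)) (i : ℕ) (f : ℕ → ℕ) :
    MeasurableSet {ω | ∀ j ≤ i, X j ω = f j} := by
  have : {ω | ∀ j ≤ i, X j ω = f j} = ⋂ j, ⋂ (_ : j ≤ i), (X j) ⁻¹' {f j} := by
    ext ω
    simp only [Set.mem_setOf_eq, Set.mem_iInter, Set.mem_preimage, Set.mem_singleton_iff]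
  rw [this]
  exact MeasurableSet.iInter fun j =>
    MeasurableSet.iInter fun _ => (hX j) (measurableSet_singleton _)

omit hα1 hα2 in
/-- the one-step Markov decomposition. -/
lemma one_step (hC : IsJumpChain α μ n X) {i m : ℕ} (hm : 1 < m) (l : ℕ) :
    μ {ω | X i ω = m ∧ X (i + 1) ω = l}
      = ENNReal.ofReal (jumpProb α m l) * μ {ω | X i ω = m} := by
  classical
  set ι := {g : Fin (i + 1) → ℕ // g ⟨i, Nat.lt_succ_self i⟩ = m} with hι
  let ext : ι → (ℕ → ℕ) := fun g j => if h : j < i + 1 then g.1 ⟨j, h⟩ else 0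
  let Path : ι → Set Ω := fun g => {ω | ∀ j ≤ i, X j ω = ext g j}
  have hexti : ∀ g : ι, ext g i = m := by
    intro g
    simp only [ext, dif_pos (Nat.lt_succ_self i)]
    exact g.2
  have hPm : ∀ g : ι, MeasurableSet (Path g) :=
    fun g => path_measurable hC.meas i (ext g)
  have hdisj : Pairwise (Function.onFun Disjoint Path) := by
    intro g g' hgg'
    rw [Function.onFun, Set.disjoint_left]
    intro ω h1 h2
    apply hgg'
    apply Subtype.ext
    funext j
    have e1 := h1 j.1 (Nat.lt_succ_iff.mp j.2)
    have e2 := h2 j.1 (Nat.lt_succ_iff.mp j.2)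
    simp only [ext, dif_pos j.2] at e1 e2
    rw [← e1, ← e2]
  have hUnion : (⋃ g : ι, Path g) = {ω | X i ω = m} := by
    apply Set.Subset.antisymm
    · rintro ω ⟨s, ⟨g, rfl⟩, hω⟩
      have := hω i (le_refl i)
      rw [hexti] at this
      exact this
    · intro ω hω
      apply Set.mem_iUnion.2
      refine ⟨⟨fun j => X j.1 ω, hω⟩, ?_⟩
      intro j hj
      simp only [ext, dif_pos (Nat.lt_succ_of_le hj)]
  have hUnion2 : (⋃ g : ι, (Path g ∩ {ω | X (i + 1) ω = l}))
      = {ω | X i ω = m ∧ X (i + 1) ω = l} := by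
    rw [← Set.iUnion_inter, hUnion]
    rfl
  have hdisj2 : Pairwise (Function.onFun Disjoint fun g => Path g ∩ {ω | X (i + 1) ω = l}) :=
    fun g g' h => ((hdisj h).mono Set.inter_subset_left Set.inter_subset_left)
  have hmeas2 : ∀ g : ι, MeasurableSet (Path g ∩ {ω | X (i + 1) ω = l}) :=
    fun g => (hPm g).inter ((hC.meas (i + 1)) (measurableSet_singleton l))
  have hone : ∀ g : ι, μ (Path g ∩ {ω | X (i + 1) ω = l})
      = ENNReal.ofReal (jumpProb α m l) * μ (Path g) := by
    intro g
    have hmk := hC.markov i (ext g) (by rw [hexti]; exact hm) l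
    rw [hexti] at hmk
    have : {ω | (∀ j ≤ i, X j ω = ext g j) ∧ X (i + 1) ω = l}
        = Path g ∩ {ω | X (i + 1) ω = l} := rfl
    rw [this] at hmk
    exact hmk
  rw [← hUnion2, measure_iUnion hdisj2 hmeas2, tsum_congr hone,
    ENNReal.tsum_mul_left, ← measure_iUnion hdisj hPm, hUnion]

omit hα1 hα2 in
lemma visits_le_one (hC : IsJumpChain α μ n X) [IsProbabilityMeasure μ]
    {m : ℕ} (hm : 1 < m) : ∑' i : ℕ, μ {ω | X i ω = m} ≤ 1 := by
  have hAE : Pairwise (Function.onFun (MeasureTheory.AEDisjoint μ) fun i => {ω | X i ω = m}) := by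
    intro i j hij
    apply measure_mono_null _ (good_null (α := α) hC)
    intro ω hω
    simp only [Set.mem_inter_iff, Set.mem_setOf_eq] at hω
    intro hg
    rcases Nat.lt_or_ge i j with h | h
    · have := good_strict hg h (by omega)
      omega
    · have := good_strict hg (by omega : j < i) (by omega)
      omega
  have := MeasureTheory.tsum_measure_le_measure_univ
    (fun i => ((hC.meas i) (measurableSet_singleton m)).nullMeasurableSet) hAE
  exact this.trans_eq measure_univ

include hα1 hα2 in
lemma cross_bound (hC : IsJumpChain α μ n X) [IsProbabilityMeasure μ]
    {m a : ℕ} (ha2 : 2 ≤ a) (ham : a < m) :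
    μ (⋃ i : ℕ, {ω | X i ω = m ∧ X (i + 1) ω < a})
      ≤ ENNReal.ofReal (Vge α (m - a + 1)) := by
  have hm : 1 < m := by omega
  set Q : ℝ≥0∞ := ∑ l ∈ Finset.range a, ENNReal.ofReal (jumpProb α m l) with hQdef
  have hQle : Q ≤ ENNReal.ofReal (Vge α (m - a + 1)) := by
    rw [hQdef, ← ENNReal.ofReal_sum_of_nonneg]
    · exact ENNReal.ofReal_le_ofReal (jump_tail_le hα1 hα2 ha2 ham)
    · intro l hl
      simp only [Finset.mem_range] at hl
      exact jumpProb_nonneg hα1 hα2 (by omega) (by omega)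
  have hstep : ∀ i : ℕ, μ {ω | X i ω = m ∧ X (i + 1) ω < a} ≤ Q * μ {ω | X i ω = m} := by
    intro i
    have hdec : {ω | X i ω = m ∧ X (i + 1) ω < a}
        = ⋃ l ∈ Finset.range a, {ω | X i ω = m ∧ X (i + 1) ω = l} := by
      ext ω
      simp only [Set.mem_setOf_eq, Set.mem_iUnion, Finset.mem_range]
      constructor
      · rintro ⟨h1, h2⟩; exact ⟨X (i + 1) ω, h2, h1, rfl⟩
      · rintro ⟨l, hl, h1, h2⟩; exact ⟨h1, h2 ▸ hl⟩
    rw [hdec]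
    refine le_trans (measure_biUnion_finset_le _ _) ?_
    rw [hQdef, Finset.sum_mul]
    apply Finset.sum_le_sum
    intro l _
    rw [one_step hC hm l]
  calc μ (⋃ i : ℕ, {ω | X i ω = m ∧ X (i + 1) ω < a})
      ≤ ∑' i : ℕ, μ {ω | X i ω = m ∧ X (i + 1) ω < a} := measure_iUnion_le _
    _ ≤ ∑' i : ℕ, Q * μ {ω | X i ω = m} := ENNReal.tsum_le_tsum hstep
    _ = Q * ∑' i : ℕ, μ {ω | X i ω = m} := ENNReal.tsum_mul_left
    _ ≤ Q * 1 := mul_le_mul_right (visits_le_one (α := α) hC hm) Q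
    _ = Q := mul_one Q
    _ ≤ _ := hQle

include hα1 hα2 in
/-- the main estimate: finite-sum form. -/
lemma avoid_bound (hC : IsJumpChain α μ n X) [IsProbabilityMeasure μ]
    {a b : ℕ} (ha : 2 ≤ a) (hab : a < b) (hbn : b < n) :
    μ {ω | ∀ i, X i ω ∉ Set.Icc a b}
      ≤ ∑ k ∈ Finset.range (n - b), ENNReal.ofReal (Vgt α (b - a + (k + 1))) := by
  classical
  set Bad := {ω | ¬ GoodP n X ω} with hBad
  have hBad0 : μ Bad = 0 := good_null (α := α) hC
  have hsub : {ω | ∀ i, X i ω ∉ Set.Icc a b}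
      ⊆ Bad ∪ ⋃ m ∈ Finset.Ioc b n, ⋃ i : ℕ, {ω | X i ω = m ∧ X (i + 1) ω < a} := by
    intro ω hω
    by_cases hg : GoodP n X ω
    · right
      obtain ⟨i, ⟨hb1, hb2⟩, hia⟩ := good_cross hg hω ha hab hbn
      simp only [Set.mem_iUnion, Finset.mem_Ioc]
      exact ⟨X i ω, ⟨hb1, hb2⟩, i, rfl, hia⟩
    · left; exact hg
  calc μ {ω | ∀ i, X i ω ∉ Set.Icc a b}
      ≤ μ (Bad ∪ ⋃ m ∈ Finset.Ioc b n, ⋃ i : ℕ, {ω | X i ω = m ∧ X (i + 1) ω < a}) :=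
        measure_mono hsub
    _ ≤ μ Bad + μ (⋃ m ∈ Finset.Ioc b n, ⋃ i : ℕ, {ω | X i ω = m ∧ X (i + 1) ω < a}) :=
        measure_union_le _ _
    _ = μ (⋃ m ∈ Finset.Ioc b n, ⋃ i : ℕ, {ω | X i ω = m ∧ X (i + 1) ω < a}) := by
        rw [hBad0, zero_add]
    _ ≤ ∑ m ∈ Finset.Ioc b n, μ (⋃ i : ℕ, {ω | X i ω = m ∧ X (i + 1) ω < a}) :=
        measure_biUnion_finset_le _ _
    _ ≤ ∑ m ∈ Finset.Ioc b n, ENNReal.ofReal (Vge α (m - a + 1)) := by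
        apply Finset.sum_le_sum
        intro m hmm
        simp only [Finset.mem_Ioc] at hmm
        exact cross_bound hα1 hα2 hC ha (by omega)
    _ = ∑ k ∈ Finset.range (n - b), ENNReal.ofReal (Vgt α (b - a + (k + 1))) := by
        rw [show Finset.Ioc b n = Finset.Ico (b + 1) (n + 1) by
          ext x; simp only [Finset.mem_Ioc, Finset.mem_Ico]; omega]
        rw [Finset.sum_Ico_eq_sum_range]
        apply Finset.sum_congr (by congr 1; omega)
        intro k hk
        simp only [Finset.mem_range] at hk
        congr 1
        rw [Vgt]
        congr 1
        omega

end prob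

end Avoid

/-- For the block-counting jump chain started from `n` and integers
`2 ≤ a < b < n`, the probability that no `X_i` lies in `[a,b]` is at most
`∑_{k=1}^∞ P(V > b-a+k)`; consequently, for every `ε > 0` there is `r` such that for every
chain and every interval `[a,b] ⊆ [2,n-1]` with `b - a ≥ r` this probability is at most
`ε`. -/
theorem avoid_interval (α : ℝ) (hα1 : 1 < α) (hα2 : α < 2) :
    (∀ (Ω : Type) (_ : MeasurableSpace Ω) (μ : Measure Ω), IsProbabilityMeasure μ →
      ∀ (n : ℕ) (X : ℕ → Ω → ℕ), IsJumpChain α μ n X →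
      ∀ a b : ℕ, 2 ≤ a → a < b → b < n →
        μ {ω | ∀ i, X i ω ∉ Set.Icc a b}
          ≤ ENNReal.ofReal (∑' k : ℕ, Vgt α (b - a + (k + 1)))) ∧
    (∀ ε : ℝ, 0 < ε → ∃ r : ℕ,
      ∀ (Ω : Type) (_ : MeasurableSpace Ω) (μ : Measure Ω), IsProbabilityMeasure μ →
      ∀ (n : ℕ) (X : ℕ → Ω → ℕ), IsJumpChain α μ n X →
      ∀ a b : ℕ, 2 ≤ a → a < b → b < n → r ≤ b - a →
        μ {ω | ∀ i, X i ω ∉ Set.Icc a b} ≤ ENNReal.ofReal ε) := by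
  have P1 : ∀ (Ω : Type) (_ : MeasurableSpace Ω) (μ : Measure Ω), IsProbabilityMeasure μ →
      ∀ (n : ℕ) (X : ℕ → Ω → ℕ), IsJumpChain α μ n X →
      ∀ a b : ℕ, 2 ≤ a → a < b → b < n →
        μ {ω | ∀ i, X i ω ∉ Set.Icc a b}
          ≤ ENNReal.ofReal (∑' k : ℕ, Vgt α (b - a + (k + 1))) := by
    intro Ω _ μ hμ n X hC a b ha hab hbn
    refine le_trans (Avoid.avoid_bound hα1 hα2 hC ha hab hbn) ?_
    rw [← ENNReal.ofReal_sum_of_nonneg (fun k _ => Avoid.Vgt_nonneg hα1 hα2 _)]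
    apply ENNReal.ofReal_le_ofReal
    exact Summable.sum_le_tsum _ (fun k _ => Avoid.Vgt_nonneg hα1 hα2 _)
      (Avoid.tail_summable hα1 hα2 (b - a))
  refine ⟨P1, ?_⟩
  intro ε hε
  have h1 := ((Avoid.Hf_tendsto hα1 hα2).comp (Filter.tendsto_add_atTop_nat 1)).sub_const
    (Avoid.Lf α)
  rw [sub_self] at h1
  have h2 := h1.div_const ((α - 1) * Real.Gamma (2 - α))
  rw [zero_div] at h2
  have h3 : ∀ᶠ d : ℕ in Filter.atTop,
      (Avoid.Hf α (d + 1) - Avoid.Lf α) / ((α - 1) * Real.Gamma (2 - α)) < ε := by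
    have := h2.eventually_lt_const hε
    apply this.mono
    intro d hd
    exact hd
  obtain ⟨r, hr⟩ := Filter.eventually_atTop.1 h3
  refine ⟨r, ?_⟩
  intro Ω _ μ hμ n X hC a b ha hab hbn hba
  refine le_trans (P1 Ω _ μ hμ n X hC a b ha hab hbn) ?_
  rw [Avoid.tail_tsum_eq hα1 hα2 (b - a)]
  exact ENNReal.ofReal_le_ofReal (le_of_lt (hr (b - a) hba))


end
end

section
/- Let a, b > 0, let w be a positive integer and p ∈ [0,1] with w·p ≤ 1/(α−1). Let (ζ_j)_{j≥0} be i.i.d. nonnegative random variables with Laplace transform E[e^{−λζ_j}] = exp(−λ^{α−1}) for all λ ≥ 0, and let (I_j)_{j≥0} be i.i.d. Bernoulli(p) random variables independent of (ζ_j). Set W = ∑_{j=0}^{w} (a + b·ζ_j)·I_j. Then there is a constant c < ∞ depending only on a, b and α (not on w, p or t) such that P(W > t) ≤ c·t^{1−α} for all t > 0. -/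
open MeasureTheory ProbabilityTheory Filter
open scoped ENNReal Topology Classical

noncomputable section

lemma aux_one_sub_prod {ι : Type*} (s : Finset ι) (f : ι → ℝ)
    (h0 : ∀ i ∈ s, 0 ≤ f i) (h1 : ∀ i ∈ s, f i ≤ 1) :
    1 - ∏ i ∈ s, f i ≤ ∑ i ∈ s, (1 - f i) := by
  induction s using Finset.cons_induction with
  | empty => simp
  | cons i s hi ih =>
    rw [Finset.prod_cons, Finset.sum_cons]
    have hP0 : 0 ≤ ∏ j ∈ s, f j :=
      Finset.prod_nonneg fun j hj => h0 j (Finset.mem_cons_of_mem hj)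
    have hP1 : ∏ j ∈ s, f j ≤ 1 :=
      Finset.prod_le_one (fun j hj => h0 j (Finset.mem_cons_of_mem hj))
        (fun j hj => h1 j (Finset.mem_cons_of_mem hj))
    have hih := ih (fun j hj => h0 j (Finset.mem_cons_of_mem hj))
      (fun j hj => h1 j (Finset.mem_cons_of_mem hj))
    have hfi0 := h0 i (Finset.mem_cons_self i s)
    have hfi1 := h1 i (Finset.mem_cons_self i s)
    nlinarith [mul_nonneg (sub_nonneg.2 hfi1) (sub_nonneg.2 hP1)]

lemma aux_term (α a b l p : ℝ) (hl : 0 < l) (ha : 0 < a) (hb : 0 < b)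
    (hp : 0 ≤ p) (hp1 : p ≤ 1)
    {Ω : Type} [MeasurableSpace Ω] (μ : Measure Ω) [IsProbabilityMeasure μ]
    (ζ : Ω → ℝ) (I : Ω → ℕ) (hζm : Measurable ζ) (hIm : Measurable I)
    (hζ0 : ∀ᵐ ω ∂μ, 0 ≤ ζ ω)
    (hLap : ∀ l' : ℝ, 0 ≤ l' → ∫ ω, Real.exp (-l' * ζ ω) ∂μ = Real.exp (-l' ^ (α - 1)))
    (hI1 : μ {ω | I ω = 1} = ENNReal.ofReal p)
    (hI0 : μ {ω | I ω = 0} = ENNReal.ofReal (1 - p))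
    (hind : IndepFun ζ I μ) :
    ∫ ω, (1 - Real.exp (-(l * ((a + b * ζ ω) * (I ω : ℝ))))) ∂μ
      ≤ p * (l * a + (l * b) ^ (α - 1)) := by
  set A : Set Ω := {ω | I ω = 1} with hAdef
  set B : Set Ω := {ω | I ω = 0} with hBdef
  have hA : MeasurableSet A := hIm (measurableSet_singleton 1)
  have hB : MeasurableSet B := hIm (measurableSet_singleton 0)
  have hdisj : Disjoint A B := by
    rw [Set.disjoint_left]
    intro ω h1 h0
    simp only [hAdef, hBdef, Set.mem_setOf_eq] at h1 h0
    omega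
  have hAB : μ (A ∪ B) = 1 := by
    rw [measure_union hdisj hB, hI1, hI0, ← ENNReal.ofReal_add hp (by linarith)]
    norm_num
  have hae : ∀ᵐ ω ∂μ, I ω = 0 ∨ I ω = 1 := by
    have hc : μ (A ∪ B)ᶜ = 0 := by
      rw [measure_compl (hA.union hB) (measure_ne_top μ _), hAB, measure_univ, tsub_self]
    rw [ae_iff]
    convert hc using 2
    ext ω
    simp only [Set.mem_setOf_eq, Set.mem_compl_iff, Set.mem_union, hAdef, hBdef]
    tauto
  set F : Ω → ℝ := fun ω => 1 - Real.exp (-(l * (a + b * ζ ω))) with hFdef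
  set G : Ω → ℝ := fun ω => if I ω = 1 then 1 else 0 with hGdef
  have heq : ∀ᵐ ω ∂μ, (1 - Real.exp (-(l * ((a + b * ζ ω) * (I ω : ℝ))))) = F ω * G ω := by
    filter_upwards [hae] with ω hω
    rcases hω with h | h <;> simp [hFdef, hGdef, h]
  have hFm : Measurable F := by
    have : Measurable fun x : ℝ => 1 - Real.exp (-(l * (a + b * x))) := by fun_prop
    exact this.comp hζm
  have hGm : Measurable G :=
    (measurable_from_top (f := fun n : ℕ => if n = 1 then (1:ℝ) else 0)).comp hIm
  have hφ : Measurable fun x : ℝ => 1 - Real.exp (-(l * (a + b * x))) := by fun_prop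
  have hψ : Measurable fun n : ℕ => if n = 1 then (1:ℝ) else 0 := measurable_from_top
  have hindFG : IndepFun F G μ := hind.comp hφ hψ
  have hmul : (∫ ω, F ω * G ω ∂μ) = (∫ ω, F ω ∂μ) * ∫ ω, G ω ∂μ :=
    hindFG.integral_mul_eq_mul_integral hFm.aestronglyMeasurable hGm.aestronglyMeasurable
  have hG : (∫ ω, G ω ∂μ) = p := by
    have hGi : G = Set.indicator A fun _ => (1:ℝ) := by
      ext ω
      simp [hGdef, Set.indicator_apply, hAdef, Set.mem_setOf_eq]
    rw [hGi, integral_indicator_const _ hA, measureReal_def, hI1, smul_eq_mul, mul_one,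
      ENNReal.toReal_ofReal hp]
  have hF : (∫ ω, F ω ∂μ) = 1 - Real.exp (-(l * a + (l * b) ^ (α - 1))) := by
    have hHm : Measurable fun ω => Real.exp (-(l * (a + b * ζ ω))) := by fun_prop
    have hHi : Integrable (fun ω => Real.exp (-(l * (a + b * ζ ω)))) μ := by
      refine Integrable.mono' (integrable_const 1) hHm.aestronglyMeasurable ?_
      filter_upwards [hζ0] with ω hω
      rw [Real.norm_eq_abs, abs_of_pos (Real.exp_pos _)]
      apply Real.exp_le_one_iff.2
      have : 0 ≤ l * (a + b * ζ ω) := by positivity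
      linarith
    have hsplit : ∀ ω, Real.exp (-(l * (a + b * ζ ω)))
        = Real.exp (-(l * a)) * Real.exp (-(l * b) * ζ ω) := by
      intro ω
      rw [← Real.exp_add]
      ring_nf
    have : (∫ ω, Real.exp (-(l * (a + b * ζ ω))) ∂μ)
        = Real.exp (-(l * a)) * Real.exp (-(l * b) ^ (α - 1)) := by
      simp_rw [hsplit]
      rw [integral_const_mul, hLap (l * b) (by positivity)]
    rw [hFdef]
    rw [integral_sub (integrable_const 1) hHi, integral_const, probReal_univ, this,
      ← Real.exp_add]
    ring_nf
  have hx : 1 - Real.exp (-(l * a + (l * b) ^ (α - 1))) ≤ l * a + (l * b) ^ (α - 1) := by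
    have := Real.add_one_le_exp (-(l * a + (l * b) ^ (α - 1)))
    linarith
  calc ∫ ω, (1 - Real.exp (-(l * ((a + b * ζ ω) * (I ω : ℝ))))) ∂μ
      = ∫ ω, F ω * G ω ∂μ := integral_congr_ae heq
    _ = (1 - Real.exp (-(l * a + (l * b) ^ (α - 1)))) * p := by rw [hmul, hG, hF]
    _ ≤ (l * a + (l * b) ^ (α - 1)) * p := mul_le_mul_of_nonneg_right hx hp
    _ = p * (l * a + (l * b) ^ (α - 1)) := mul_comm _ _

/-- Let `a, b > 0`. There is a constant `c` depending only on `a`, `b` and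
`α` such that for any positive integer `w` and `p ∈ [0,1]` with `w·p ≤ 1/(α-1)`, any
i.i.d. nonnegative `(ζ_j)` with Laplace transform `exp(-λ^{α-1})`, and any i.i.d.
Bernoulli(`p`) family `(I_j)` independent of `(ζ_j)`, the random variable
`W = ∑_{j=0}^w (a + b·ζ_j)·I_j` satisfies `P(W > t) ≤ c·t^{1-α}` for all `t > 0`. -/
theorem thinned_stable_sum_tail (α : ℝ) (hα1 : 1 < α) (hα2 : α < 2)
    (a b : ℝ) (ha : 0 < a) (hb : 0 < b) :
    ∃ c : ℝ, ∀ (w : ℕ), 1 ≤ w → ∀ p : ℝ, 0 ≤ p → p ≤ 1 → (w : ℝ) * p ≤ 1 / (α - 1) →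
      ∀ (Ω : Type) (_ : MeasurableSpace Ω) (μ : Measure Ω), IsProbabilityMeasure μ →
      ∀ (ζ : ℕ → Ω → ℝ) (I : ℕ → Ω → ℕ),
        (∀ j, Measurable (ζ j)) →
        (∀ j, Measurable (I j)) →
        (∀ j, ∀ᵐ ω ∂μ, 0 ≤ ζ j ω) →
        iIndepFun ζ μ →
        (∀ j, ∀ l : ℝ, 0 ≤ l → ∫ ω, Real.exp (-l * ζ j ω) ∂μ = Real.exp (-l ^ (α - 1))) →
        iIndepFun I μ →
        (∀ j, μ {ω | I j ω = 1} = ENNReal.ofReal p ∧ μ {ω | I j ω = 0} = ENNReal.ofReal (1 - p)) →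
        Indep (⨆ j, MeasurableSpace.comap (ζ j) inferInstance)
              (⨆ j, MeasurableSpace.comap (I j) inferInstance) μ →
        ∀ t : ℝ, 0 < t →
          μ {ω | t < ∑ j ∈ Finset.range (w + 1), (a + b * ζ j ω) * (I j ω : ℝ)}
            ≤ ENNReal.ofReal (c * t ^ (1 - α)) := by
  have hα1' : (0:ℝ) < α - 1 := by linarith
  set M : ℝ := 1 / (α - 1) + 1 with hMdef
  have hM : 0 < M := by positivity
  have hE : (0:ℝ) < 1 - Real.exp (-1) := by
    have h := Real.exp_lt_exp.2 (show (-1:ℝ) < 0 by norm_num)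
    rw [Real.exp_zero] at h
    linarith
  set K : ℝ := (a + b ^ (α - 1)) * M / (1 - Real.exp (-1)) with hKdef
  refine ⟨max 1 K, ?_⟩
  intro w hw p hp0 hp1 hwp Ω mΩ μ hμ ζ I hζm hIm hζ0 hζind hLap hIind hIber hind t ht
  haveI := hμ
  set W : Ω → ℝ := fun ω => ∑ j ∈ Finset.range (w + 1), (a + b * ζ j ω) * (I j ω : ℝ)
    with hWdef
  have hWm : Measurable W := by
    apply Finset.measurable_sum
    intro j _
    exact (measurable_const.add ((hζm j).const_mul b)).mul
      (measurable_from_top.comp (hIm j))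
  have hAmeas : MeasurableSet {ω | t < W ω} := measurableSet_lt measurable_const hWm
  have hζall : ∀ᵐ ω ∂μ, ∀ j, 0 ≤ ζ j ω := ae_all_iff.2 hζ0
  by_cases hT : t ≤ 1
  · -- trivial case
    have h1 : (1:ℝ) ≤ t ^ (1 - α) := by
      calc (1:ℝ) = t ^ (0:ℝ) := (Real.rpow_zero t).symm
        _ ≤ t ^ (1 - α) := Real.rpow_le_rpow_of_exponent_ge ht hT (by linarith)
    have hc1 : (1:ℝ) ≤ max 1 K := le_max_left _ _
    calc μ {ω | t < W ω} ≤ 1 := prob_le_one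
      _ = ENNReal.ofReal 1 := by simp
      _ ≤ ENNReal.ofReal (max 1 K * t ^ (1 - α)) :=
          ENNReal.ofReal_le_ofReal (by nlinarith)
  · push_neg at hT
    set l : ℝ := 1 / t with hldef
    have hl : 0 < l := by positivity
    have hindj : ∀ j, IndepFun (ζ j) (I j) μ := fun j =>
      indep_of_indep_of_le_left
        (indep_of_indep_of_le_right hind
          (le_iSup (fun j => MeasurableSpace.comap (I j) inferInstance) j))
        (le_iSup (fun j => MeasurableSpace.comap (ζ j) inferInstance) j)
    have hterm : ∀ j, ∫ ω, (1 - Real.exp (-(l * ((a + b * ζ j ω) * (I j ω : ℝ))))) ∂μ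
        ≤ p * (l * a + (l * b) ^ (α - 1)) := fun j =>
      aux_term α a b l p hl ha hb hp0 hp1 μ (ζ j) (I j) (hζm j) (hIm j) (hζ0 j) (hLap j)
        (hIber j).1 (hIber j).2 (hindj j)
    -- integrability of each term
    have htm : ∀ j, Measurable fun ω => 1 - Real.exp (-(l * ((a + b * ζ j ω) * (I j ω : ℝ)))) := by
      intro j
      exact (measurable_const.sub (((measurable_const.add ((hζm j).const_mul b)).mul
        (measurable_from_top.comp (hIm j))).const_mul l).neg.exp)
    have hti : ∀ j, Integrable
        (fun ω => 1 - Real.exp (-(l * ((a + b * ζ j ω) * (I j ω : ℝ))))) μ := by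
      intro j
      refine Integrable.mono' (integrable_const 1) (htm j).aestronglyMeasurable ?_
      filter_upwards [hζ0 j] with ω hω
      rw [Real.norm_eq_abs, abs_le]
      have hexp0 : 0 ≤ l * ((a + b * ζ j ω) * (I j ω : ℝ)) := by positivity
      have h1 : Real.exp (-(l * ((a + b * ζ j ω) * (I j ω : ℝ)))) ≤ 1 :=
        Real.exp_le_one_iff.2 (by linarith)
      have h2 := Real.exp_pos (-(l * ((a + b * ζ j ω) * (I j ω : ℝ))))
      constructor <;> linarith
    set g : Ω → ℝ := fun ω => 1 - Real.exp (-(l * W ω)) with hgdef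
    have hgm : Measurable g := measurable_const.sub ((hWm.const_mul l).neg.exp)
    have hW0 : ∀ᵐ ω ∂μ, 0 ≤ W ω := by
      filter_upwards [hζall] with ω hω
      apply Finset.sum_nonneg
      intro j _
      have := hω j
      positivity
    have hgi : Integrable g μ := by
      refine Integrable.mono' (integrable_const 1) hgm.aestronglyMeasurable ?_
      filter_upwards [hW0] with ω hω
      show ‖1 - Real.exp (-(l * W ω))‖ ≤ 1
      rw [Real.norm_eq_abs, abs_le]
      have hexp0 : 0 ≤ l * W ω := by positivity
      have h1 : Real.exp (-(l * W ω)) ≤ 1 := Real.exp_le_one_iff.2 (by linarith)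
      have h2 := Real.exp_pos (-(l * W ω))
      constructor <;> linarith
    -- pointwise bound
    have hpoint : ∀ᵐ ω ∂μ, g ω ≤
        ∑ j ∈ Finset.range (w + 1), (1 - Real.exp (-(l * ((a + b * ζ j ω) * (I j ω : ℝ))))) := by
      filter_upwards [hζall] with ω hω
      have hprod : Real.exp (-(l * W ω)) =
          ∏ j ∈ Finset.range (w + 1), Real.exp (-(l * ((a + b * ζ j ω) * (I j ω : ℝ)))) := by
        rw [← Real.exp_sum]
        congr 1
        rw [hWdef]
        simp only []
        rw [Finset.mul_sum, ← Finset.sum_neg_distrib]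
      rw [hgdef]
      simp only []
      rw [hprod]
      apply aux_one_sub_prod
      · intro j _
        exact (Real.exp_pos _).le
      · intro j _
        apply Real.exp_le_one_iff.2
        have := hω j
        have : 0 ≤ l * ((a + b * ζ j ω) * (I j ω : ℝ)) := by
          have := hω j; positivity
        linarith
    set x : ℝ := l * a + (l * b) ^ (α - 1) with hxdef
    have hx0 : 0 ≤ x := by positivity
    have hsum : ∫ ω, g ω ∂μ ≤ (w + 1 : ℝ) * (p * x) := by
      calc ∫ ω, g ω ∂μ
          ≤ ∫ ω, ∑ j ∈ Finset.range (w + 1),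
              (1 - Real.exp (-(l * ((a + b * ζ j ω) * (I j ω : ℝ))))) ∂μ :=
            integral_mono_ae hgi (integrable_finset_sum _ fun j _ => hti j) hpoint
        _ = ∑ j ∈ Finset.range (w + 1),
              ∫ ω, (1 - Real.exp (-(l * ((a + b * ζ j ω) * (I j ω : ℝ))))) ∂μ :=
            integral_finset_sum _ fun j _ => hti j
        _ ≤ ∑ _j ∈ Finset.range (w + 1), p * x :=
            Finset.sum_le_sum fun j _ => hterm j
        _ = (w + 1 : ℝ) * (p * x) := by
            rw [Finset.sum_const, Finset.card_range, nsmul_eq_mul]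
            push_cast
            ring
    -- Markov
    have hmark : (1 - Real.exp (-1)) * (μ {ω | t < W ω}).toReal ≤ ∫ ω, g ω ∂μ := by
      have hind_le : ∀ᵐ ω ∂μ,
          Set.indicator {ω | t < W ω} (fun _ => 1 - Real.exp (-1)) ω ≤ g ω := by
        filter_upwards [hW0] with ω hω
        by_cases hωA : ω ∈ {ω | t < W ω}
        · rw [Set.indicator_of_mem hωA]
          have hWt : t < W ω := hωA
          have h1 : (1:ℝ) < l * W ω := by
            rw [hldef]
            rw [div_mul_eq_mul_div, lt_div_iff₀ ht]
            linarith
          have := Real.exp_lt_exp.2 (show -(l * W ω) < -1 by linarith)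
          rw [hgdef]
          simp only []
          linarith
        · rw [Set.indicator_of_notMem hωA]
          have h1 : Real.exp (-(l * W ω)) ≤ 1 :=
            Real.exp_le_one_iff.2 (by nlinarith)
          rw [hgdef]; simp only []; linarith
      have hii : Integrable
          (Set.indicator {ω | t < W ω} fun _ => 1 - Real.exp (-1)) μ :=
        (integrable_const _).indicator hAmeas
      have h := integral_mono_ae hii hgi hind_le
      rwa [integral_indicator_const _ hAmeas, smul_eq_mul, mul_comm] at h
    -- arithmetic conclusion
    have htp : (0:ℝ) < t ^ (1 - α) := Real.rpow_pos_of_pos ht _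
    have hwp1 : (w + 1 : ℝ) * p ≤ M := by
      rw [hMdef]
      nlinarith
    have hxle : x ≤ (a + b ^ (α - 1)) * t ^ (1 - α) := by
      have hla : l * a ≤ a * t ^ (1 - α) := by
        have h1 : l = t ^ (-1 : ℝ) := by
          rw [hldef, Real.rpow_neg_one]
          exact one_div t
        have h2 : t ^ (-1 : ℝ) ≤ t ^ (1 - α) :=
          Real.rpow_le_rpow_of_exponent_le hT.le (by linarith)
        rw [h1]
        calc t ^ (-1:ℝ) * a ≤ t ^ (1 - α) * a :=
            mul_le_mul_of_nonneg_right h2 ha.le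
          _ = a * t ^ (1 - α) := mul_comm _ _
      have hlb : (l * b) ^ (α - 1) = b ^ (α - 1) * t ^ (1 - α) := by
        rw [Real.mul_rpow hl.le hb.le]
        have h1 : l = t ^ (-1 : ℝ) := by
          rw [hldef, Real.rpow_neg_one]; exact one_div t
        have h2 : (t ^ (-1:ℝ)) ^ (α - 1) = t ^ (1 - α) := by
          rw [← Real.rpow_mul ht.le]
          congr 1
          ring
        rw [h1, h2, mul_comm]
      rw [hxdef, hlb]
      nlinarith [hla]
    have hKe : K * (1 - Real.exp (-1)) = (a + b ^ (α - 1)) * M := by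
      rw [hKdef]
      field_simp
    have h3 : (∫ ω, g ω ∂μ) ≤ M * ((a + b ^ (α - 1)) * t ^ (1 - α)) := by
      have hb1 : (w + 1 : ℝ) * (p * x) ≤ M * x := by
        calc (w + 1 : ℝ) * (p * x) = ((w + 1 : ℝ) * p) * x := by ring
          _ ≤ M * x := mul_le_mul_of_nonneg_right hwp1 hx0
      have hb2 : M * x ≤ M * ((a + b ^ (α - 1)) * t ^ (1 - α)) :=
        mul_le_mul_of_nonneg_left hxle hM.le
      linarith [hsum]
    have h5 : K * t ^ (1 - α) ≤ max 1 K * t ^ (1 - α) :=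
      mul_le_mul_of_nonneg_right (le_max_right _ _) htp.le
    have hfinal : (μ {ω | t < W ω}).toReal ≤ max 1 K * t ^ (1 - α) := by
      have h6 : (1 - Real.exp (-1)) * (μ {ω | t < W ω}).toReal
          ≤ (1 - Real.exp (-1)) * (max 1 K * t ^ (1 - α)) := by
        calc (1 - Real.exp (-1)) * (μ {ω | t < W ω}).toReal
            ≤ ∫ ω, g ω ∂μ := hmark
          _ ≤ M * ((a + b ^ (α - 1)) * t ^ (1 - α)) := h3
          _ = K * t ^ (1 - α) * (1 - Real.exp (-1)) := by
              linear_combination t ^ (1 - α) * hKe.symm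
          _ ≤ max 1 K * t ^ (1 - α) * (1 - Real.exp (-1)) :=
              mul_le_mul_of_nonneg_right h5 hE.le
          _ = (1 - Real.exp (-1)) * (max 1 K * t ^ (1 - α)) := by ring
      exact le_of_mul_le_mul_left h6 hE
    calc μ {ω | t < W ω}
        = ENNReal.ofReal (μ {ω | t < W ω}).toReal :=
          (ENNReal.ofReal_toReal (measure_ne_top μ _)).symm
      _ ≤ ENNReal.ofReal (max 1 K * t ^ (1 - α)) :=
          ENNReal.ofReal_le_ofReal hfinal


end
end
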